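/- arXiv:2209.00767 — 8 statements merged into one kernel-verified Lean document; each statement's English description precedes it below -/
import Mathlib

section
/- If A and B are elements of an associative algebra over a field of characteristic zero such that the commutator [A,B] commutes with both A and B (and the relevant exponentials exist, e.g. in a formal setting where A and B are locally nilpotent or in a topologically complete algebra), then exp(A)·exp(B) = exp(B)·exp(A)·exp([A,B]). -/
open scoped BigOperators

/-- Key algebraic identity: if `C = AB - BA` commutes with `A`, then
`A^(n+1) * B = B * A^(n+1) + (n+1) • (C * A^n)`. -/
private lemma pow_mul_comm_aux {𝔸 : Type*} [Ring 𝔸]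
    (A B : 𝔸) (hA : Commute (A * B - B * A) A) (n : ℕ) :
    A ^ (n + 1) * B = B * A ^ (n + 1) + (n + 1) • ((A * B - B * A) * A ^ n) := by
  induction n with
  | zero => simp only [zero_add, pow_one, pow_zero, mul_one, one_smul]; noncomm_ring
  | succ n ih =>
    have hCA : (A * B - B * A) * A = A * (A * B - B * A) := hA.eq
    have hpow : A ^ (n + 2) = A * A ^ (n + 1) := pow_succ' A (n + 1)
    have hAC : A * ((A * B - B * A) * A ^ n) = (A * B - B * A) * A ^ (n + 1) := by
      rw [pow_succ' A n, ← mul_assoc, ← hCA, mul_assoc]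
    have hstep : A ^ (n + 1 + 1) * B = A * (A ^ (n + 1) * B) := by
      rw [show n + 1 + 1 = n + 2 from rfl, hpow, mul_assoc]
    rw [hstep, ih, mul_add, mul_smul_comm, hAC]
    have hAB : A * (B * A ^ (n + 1)) = B * A ^ (n + 2) + (A * B - B * A) * A ^ (n + 1) := by
      rw [hpow]; noncomm_ring
    rw [hAB, show (n + 1 + 1) • ((A * B - B * A) * A ^ (n + 1))
        = (n + 1) • ((A * B - B * A) * A ^ (n + 1)) + (A * B - B * A) * A ^ (n + 1)
      from succ_nsmul _ _, show n + 1 + 1 = n + 2 from rfl, add_assoc]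
    congr 1
    rw [add_comm]

open NormedSpace in
/-- If `C = AB - BA` commutes with `A`, then `exp A * B = (B + C) * exp A`. -/
private lemma exp_mul_eq {𝔸 : Type*} [NormedRing 𝔸] [NormedAlgebra ℂ 𝔸] [CompleteSpace 𝔸]
    (A B : 𝔸) (hA : Commute (A * B - B * A) A) :
    exp A * B = (B + (A * B - B * A)) * exp A := by
  set C := A * B - B * A with hC
  set s : ℕ → 𝔸 := fun n => ((n.factorial : ℂ)⁻¹) • A ^ n with hs_def
  have hs : Summable s := expSeries_summable' (𝕂 := ℂ) A
  have hexp : exp A = ∑' n, s n := by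
    rw [exp_eq_tsum ℂ]
  -- g n is the "extra" term
  set g : ℕ → 𝔸 := fun n => Nat.rec 0 (fun m _ => ((m.factorial : ℂ)⁻¹) • (C * A ^ m)) n
    with hg_def
  have hg_zero : g 0 = 0 := rfl
  have hg_succ : ∀ n, g (n + 1) = C * s n := by
    intro n
    show ((n.factorial : ℂ)⁻¹) • (C * A ^ n) = C * (((n.factorial : ℂ)⁻¹) • A ^ n)
    rw [mul_smul_comm]
  have hg_summable : Summable g := by
    rw [← summable_nat_add_iff 1]
    simpa only [hg_succ] using hs.mul_left C
  have key : ∀ n, s n * B = B * s n + g n := by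
    intro n
    cases n with
    | zero => simp [hs_def, hg_zero]
    | succ n =>
      have hsn : s (n + 1) = (((n + 1).factorial : ℂ)⁻¹) • A ^ (n + 1) := rfl
      rw [hsn, hg_succ, smul_mul_assoc, pow_mul_comm_aux A B hA n, smul_add, mul_smul_comm]
      congr 1
      rw [← Nat.cast_smul_eq_nsmul ℂ, smul_smul]
      have h1 : ((n : ℂ) + 1) ≠ 0 := Nat.cast_add_one_ne_zero n
      have h2 : (n.factorial : ℂ) ≠ 0 := Nat.cast_ne_zero.mpr n.factorial_ne_zero
      have hcoef : (((n + 1).factorial : ℂ))⁻¹ * (((n : ℕ) + 1 : ℕ) : ℂ)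
          = ((n.factorial : ℂ))⁻¹ := by
        rw [Nat.factorial_succ]
        push_cast
        field_simp
      rw [hcoef]
      exact (mul_smul_comm _ C _).symm
  calc exp A * B = (∑' n, s n) * B := by rw [hexp]
    _ = ∑' n, s n * B := (hs.tsum_mul_right B).symm
    _ = ∑' n, (B * s n + g n) := tsum_congr key
    _ = (∑' n, B * s n) + ∑' n, g n := Summable.tsum_add (hs.mul_left B) hg_summable
    _ = B * exp A + ∑' n, g n := by rw [hs.tsum_mul_left B, ← hexp]
    _ = B * exp A + C * exp A := by
        congr 1
        rw [Summable.tsum_eq_zero_add hg_summable]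
        simp only [hg_succ]
        rw [hg_zero, zero_add, hs.tsum_mul_left C, ← hexp]
    _ = (B + C) * exp A := by rw [add_mul]

/-- **Baker–Campbell–Hausdorff special case.**
If `A` and `B` are elements of a complete normed associative algebra over `ℂ`
(a field of characteristic zero) such that the commutator `[A,B] = AB − BA`
commutes with both `A` and `B`, then
`exp(A)·exp(B) = exp(B)·exp(A)·exp([A,B])`. -/
theorem bch_special {𝔸 : Type*} [NormedRing 𝔸] [NormedAlgebra ℂ 𝔸] [CompleteSpace 𝔸]
    (A B : 𝔸) (hA : Commute (A * B - B * A) A) (hB : Commute (A * B - B * A) B) :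
    NormedSpace.exp A * NormedSpace.exp B =
      NormedSpace.exp B * NormedSpace.exp A * NormedSpace.exp (A * B - B * A) := by
  set C := A * B - B * A with hC
  have hmul : NormedSpace.exp A * B = (B + C) * NormedSpace.exp A :=
    exp_mul_eq A B hA
  letI : NormedAlgebra ℚ 𝔸 := NormedAlgebra.restrictScalars ℚ ℂ 𝔸
  set u : 𝔸ˣ := (NormedSpace.isUnit_exp A).unit with hu
  have hu_val : (u : 𝔸) = NormedSpace.exp A := rfl
  have hconj : (u : 𝔸) * B * (↑u⁻¹ : 𝔸) = B + C := by
    rw [hu_val, hmul, mul_assoc]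
    rw [show NormedSpace.exp A = (u : 𝔸) from rfl, Units.mul_inv, mul_one]
  have hexp_conj : NormedSpace.exp (B + C) = (u : 𝔸) * NormedSpace.exp B * (↑u⁻¹ : 𝔸) := by
    rw [← hconj]
    exact NormedSpace.exp_units_conj u B
  have h1 : NormedSpace.exp A * NormedSpace.exp B
      = NormedSpace.exp (B + C) * NormedSpace.exp A := by
    rw [hexp_conj, hu_val, mul_assoc, mul_assoc]
    congr 1
    rw [← hu_val, Units.inv_mul, mul_one]
  have h2 : NormedSpace.exp (B + C) = NormedSpace.exp B * NormedSpace.exp C :=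
    NormedSpace.exp_add_of_commute hB.symm
  have h3 : Commute (NormedSpace.exp C) (NormedSpace.exp A) := hA.exp
  rw [h1, h2, mul_assoc, h3.eq, ← mul_assoc]
end

section
/- For a partition λ = (λ_1,…,λ_n) with at most n parts, the symplectic Schur function bialternant formula equals its Jacobi–Trudi determinant: det(x_i^{λ_j+n−j+1} − x_i^{−(λ_j+n−j+1)})_{i,j=1}^n / det(x_i^{n−j+1} − x_i^{−(n−j+1)})_{i,j=1}^n = det( h_{λ_i−i+j}(x^±) + [j>1]·h_{λ_i−i−j+2}(x^±) )_{i,j=1}^n, where [j>1] is 1 if j>1 and 0 otherwise. -/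
open scoped BigOperators
noncomputable section

/-- The multiplicative inverse of `1 - a·w` in `R[[w]]` (its constant coefficient is the unit 1). -/
def geomInv (R : Type*) [CommRing R] (a : R) : PowerSeries R :=
  PowerSeries.invOfUnit (1 - PowerSeries.C a * PowerSeries.X) 1

/-- The generalized complete homogeneous functions attached to a list `xs` of elements of `R`:
`∏_{a ∈ xs} 1/(1 - a w) = ∑_k h_k w^k`, with `h_k = 0` for `k < 0`. -/
def genH (R : Type*) [CommRing R] (xs : List R) (k : ℤ) : R :=
  if k < 0 then 0 else PowerSeries.coeff k.toNat (xs.map (geomInv R)).prod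

/-- The list `x_1, …, x_n, x_1⁻¹, …, x_n⁻¹`. -/
def pmList {F : Type*} [Field F] {n : ℕ} (x : Fin n → F) : List F :=
  List.ofFn x ++ List.ofFn (fun i => (x i)⁻¹)

/-- Symplectic Jacobi–Trudi determinant
`det( h_{λ_i−i+j} + [j>1] h_{λ_i−i−j+2} )_{i,j=1}^N` (1-based indices). -/
def spJT (R : Type*) [CommRing R] (h : ℤ → R) (N : ℕ) (lam : Fin N → ℤ) : R :=
  Matrix.det (Matrix.of fun i j : Fin N =>
    h (lam i - (i : ℕ) + (j : ℕ)) +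
      if 1 ≤ (j : ℕ) then h (lam i - (i : ℕ) - (j : ℕ)) else 0)

/-- Skew symplectic Jacobi–Trudi determinant
`det( h_{λ_i−μ_j−i+j} + [j>l+1] h_{λ_i−i−j+2l+2} )_{i,j=1}^N` (1-based indices),
where `μ_j = 0` for `j > l`. -/
def spSkewJT (R : Type*) [CommRing R] (h : ℤ → R) (N l : ℕ)
    (lam : Fin N → ℤ) (mu : Fin l → ℤ) : R :=
  Matrix.det (Matrix.of fun i j : Fin N =>
    h (lam i - (if hj : (j : ℕ) < l then mu ⟨j, hj⟩ else 0) - (i : ℕ) + (j : ℕ)) +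
      if l < (j : ℕ) then h (lam i - (i : ℕ) - (j : ℕ) + 2 * l) else 0)

/-- Orthogonal Jacobi–Trudi determinant `det( h_{λ_i−i+j} − h_{λ_i−i−j} )_{i,j=1}^N`
(1-based indices). -/
def oJT (R : Type*) [CommRing R] (h : ℤ → R) (N : ℕ) (lam : Fin N → ℤ) : R :=
  Matrix.det (Matrix.of fun i j : Fin N =>
    h (lam i - (i : ℕ) + (j : ℕ)) - h (lam i - (i : ℕ) - (j : ℕ) - 2))

/-- Skew orthogonal Jacobi–Trudi determinant
`det( h_{λ_i−μ_j−i+j} − [j>l] h_{λ_i−i−j+2l} )_{i,j=1}^N` (1-based indices). -/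
def oSkewJT (R : Type*) [CommRing R] (h : ℤ → R) (N l : ℕ)
    (lam : Fin N → ℤ) (mu : Fin l → ℤ) : R :=
  Matrix.det (Matrix.of fun i j : Fin N =>
    h (lam i - (if hj : (j : ℕ) < l then mu ⟨j, hj⟩ else 0) - (i : ℕ) + (j : ℕ)) -
      if l ≤ (j : ℕ) then h (lam i - (i : ℕ) - (j : ℕ) + 2 * l - 2) else 0)

/-- Schur Jacobi–Trudi determinant `det( h_{λ_i−i+j} )_{i,j=1}^N`. -/
def schurJT (R : Type*) [CommRing R] (h : ℤ → R) (N : ℕ) (lam : Fin N → ℤ) : R :=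
  Matrix.det (Matrix.of fun i j : Fin N => h (lam i - (i : ℕ) + (j : ℕ)))

section SpAux
open Polynomial PowerSeries Finset

variable {F : Type*} [Field F]

def qpoly (a : F) : Polynomial F := Polynomial.X ^ 2 - Polynomial.C (a + a⁻¹) * Polynomial.X + 1

lemma qpoly_natDegree (a : F) : (qpoly a).natDegree = 2 := by
  have : qpoly a = Polynomial.C 1 * Polynomial.X ^ 2 + Polynomial.C (-(a+a⁻¹)) * Polynomial.X + Polynomial.C 1 := by
    simp [qpoly]; ring
  rw [this, Polynomial.natDegree_quadratic one_ne_zero]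

lemma qpoly_coeff0 (a : F) : (qpoly a).coeff 0 = 1 := by simp [qpoly]

lemma qpoly_coeff1 (a : F) : (qpoly a).coeff 1 = -(a+a⁻¹) := by simp [qpoly, Polynomial.coeff_one]

lemma qpoly_coeff2 (a : F) : (qpoly a).coeff 2 = 1 := by
  simp [qpoly]
  rw [Polynomial.coeff_one]
  norm_num

lemma qpoly_coeff_eq_zero (a : F) {i : ℕ} (hi : 2 < i) : (qpoly a).coeff i = 0 :=
  Polynomial.coeff_eq_zero_of_natDegree_lt (by rw [qpoly_natDegree]; exact hi)

lemma qpoly_reverse (a : F) : (qpoly a).reverse = qpoly a := by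
  ext i
  rw [Polynomial.coeff_reverse, qpoly_natDegree]
  rcases lt_or_ge 2 i with hi | hi
  · rw [Polynomial.revAt_eq_self_of_lt hi, qpoly_coeff_eq_zero a hi]
  · rw [Polynomial.revAt_le hi]
    interval_cases i
    · rw [qpoly_coeff0]; norm_num [qpoly_coeff2]
    · norm_num
    · rw [qpoly_coeff2]; norm_num [qpoly_coeff0]

lemma qpoly_monic (a : F) : (qpoly a).Monic := by
  rw [Polynomial.Monic, Polynomial.leadingCoeff, qpoly_natDegree, qpoly_coeff2]

lemma geomInv_mul (a : F) : (1 - PowerSeries.C a * PowerSeries.X) * geomInv F a = 1 := by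
  apply PowerSeries.mul_invOfUnit
  simp

lemma qpoly_coe (a : F) (ha : a ≠ 0) :
    ((qpoly a : Polynomial F) : PowerSeries F)
      = (1 - PowerSeries.C a * PowerSeries.X) * (1 - PowerSeries.C a⁻¹ * PowerSeries.X) := by
  have h : a * a⁻¹ = 1 := mul_inv_cancel₀ ha
  have e : (1 - PowerSeries.C a * PowerSeries.X) * (1 - PowerSeries.C a⁻¹ * PowerSeries.X)
      = 1 - PowerSeries.C (a + a⁻¹) * PowerSeries.X
        + PowerSeries.C (a * a⁻¹) * PowerSeries.X ^ 2 := by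
    rw [map_add, map_mul]; ring
  rw [e, h, map_one, one_mul]
  simp only [qpoly, Polynomial.coe_add, Polynomial.coe_sub, Polynomial.coe_mul,
    Polynomial.coe_pow, Polynomial.coe_X, Polynomial.coe_C, Polynomial.coe_one]
  ring

def Dk (a : F) : PowerSeries F := geomInv F a * geomInv F a⁻¹

lemma qpoly_mul_Dk (a : F) (ha : a ≠ 0) :
    ((qpoly a : Polynomial F) : PowerSeries F) * Dk a = 1 := by
  rw [qpoly_coe a ha, Dk]
  calc (1 - PowerSeries.C a * PowerSeries.X) * (1 - PowerSeries.C a⁻¹ * PowerSeries.X) *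
      (geomInv F a * geomInv F a⁻¹)
      = ((1 - PowerSeries.C a * PowerSeries.X) * geomInv F a) *
        ((1 - PowerSeries.C a⁻¹ * PowerSeries.X) * geomInv F a⁻¹) := by ring
    _ = 1 := by rw [geomInv_mul, geomInv_mul, one_mul]

lemma Dk_coeff_zero (a : F) : PowerSeries.coeff 0 (Dk a) = 1 := by
  rw [Dk, PowerSeries.coeff_zero_eq_constantCoeff, map_mul, geomInv, geomInv,
    PowerSeries.constantCoeff_invOfUnit, PowerSeries.constantCoeff_invOfUnit]
  simp

lemma Dk_rec (a : F) (ha : a ≠ 0) (m : ℕ) :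
    PowerSeries.coeff (m + 2) (Dk a)
      = (a + a⁻¹) * PowerSeries.coeff (m + 1) (Dk a) - PowerSeries.coeff m (Dk a) := by
  have h0 := qpoly_mul_Dk a ha
  have h1 : PowerSeries.coeff (m + 2) (((qpoly a : Polynomial F) : PowerSeries F) * Dk a) = 0 := by
    rw [h0, PowerSeries.coeff_one]
    simp
  have hq : ((qpoly a : Polynomial F) : PowerSeries F)
      = 1 - PowerSeries.C (a + a⁻¹) * PowerSeries.X + PowerSeries.X ^ 2 := by
    simp only [qpoly, Polynomial.coe_add, Polynomial.coe_sub, Polynomial.coe_mul,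
      Polynomial.coe_pow, Polynomial.coe_X, Polynomial.coe_C, Polynomial.coe_one]
    ring
  rw [hq] at h1
  have expand : (1 - PowerSeries.C (a + a⁻¹) * PowerSeries.X + PowerSeries.X ^ 2) * Dk a
      = Dk a - PowerSeries.C (a + a⁻¹) * (PowerSeries.X * Dk a) + PowerSeries.X ^ 2 * Dk a := by
    ring
  rw [expand, map_add, map_sub, PowerSeries.coeff_C_mul] at h1
  rw [PowerSeries.coeff_succ_X_mul (m + 1) (Dk a)] at h1
  rw [show m + 2 = m + 2 from rfl] at h1
  have hx2 : PowerSeries.coeff (m + 2) (PowerSeries.X ^ 2 * Dk a) = PowerSeries.coeff m (Dk a) :=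
    PowerSeries.coeff_X_pow_mul (Dk a) 2 m
  rw [hx2] at h1
  linear_combination h1

lemma Dk_coeff_one (a : F) (ha : a ≠ 0) :
    PowerSeries.coeff 1 (Dk a) = a + a⁻¹ := by
  have h0 := qpoly_mul_Dk a ha
  have h1 : PowerSeries.coeff 1 (((qpoly a : Polynomial F) : PowerSeries F) * Dk a) = 0 := by
    rw [h0, PowerSeries.coeff_one]; simp
  have hq : ((qpoly a : Polynomial F) : PowerSeries F)
      = 1 - PowerSeries.C (a + a⁻¹) * PowerSeries.X + PowerSeries.X ^ 2 := by
    simp only [qpoly, Polynomial.coe_add, Polynomial.coe_sub, Polynomial.coe_mul,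
      Polynomial.coe_pow, Polynomial.coe_X, Polynomial.coe_C, Polynomial.coe_one]
    ring
  have expand : (1 - PowerSeries.C (a + a⁻¹) * PowerSeries.X + PowerSeries.X ^ 2) * Dk a
      = Dk a - PowerSeries.C (a + a⁻¹) * (PowerSeries.X * Dk a) + PowerSeries.X * (PowerSeries.X * Dk a) := by
    ring
  rw [hq, expand, map_add, map_sub, PowerSeries.coeff_C_mul,
    PowerSeries.coeff_succ_X_mul 0 (Dk a), PowerSeries.coeff_succ_X_mul 0,
    PowerSeries.coeff_zero_eq_constantCoeff] at h1
  have hc0 : (PowerSeries.constantCoeff (R := F)) (Dk a) = 1 := by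
    have := Dk_coeff_zero a
    rwa [PowerSeries.coeff_zero_eq_constantCoeff] at this
  have hXc : (PowerSeries.constantCoeff (R := F)) (PowerSeries.X * Dk a) = 0 := by
    rw [map_mul]; simp
  rw [hc0, hXc] at h1
  linear_combination h1

lemma Dk_coeff_closed (a : F) (ha : a ≠ 0) (m : ℕ) :
    (a - a⁻¹) * PowerSeries.coeff m (Dk a) = a ^ ((m : ℤ) + 1) - a ^ (-((m : ℤ) + 1)) := by
  induction m using Nat.strong_induction_on with
  | _ m ih =>
    match m with
    | 0 =>
      rw [Dk_coeff_zero, mul_one]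
      norm_num
    | 1 =>
      rw [Dk_coeff_one a ha]
      have e2 : ((1 : ℕ) : ℤ) + 1 = ((2 : ℕ) : ℤ) := by norm_num
      rw [e2, zpow_neg, zpow_natCast]
      field_simp
      ring
    | (m + 2) =>
      have h1 := ih (m + 1) (by omega)
      have h0 := ih m (by omega)
      rw [Dk_rec a ha m]
      have key : (a - a⁻¹) * ((a + a⁻¹) * PowerSeries.coeff (m + 1) (Dk a) - PowerSeries.coeff m (Dk a))
          = (a + a⁻¹) * ((a - a⁻¹) * PowerSeries.coeff (m + 1) (Dk a))
            - (a - a⁻¹) * PowerSeries.coeff m (Dk a) := by ring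
      rw [key, h1, h0]
      have hc1 : ((m + 2 : ℕ) : ℤ) + 1 = ((m + 1 : ℕ) : ℤ) + 1 + 1 := by push_cast; ring
      have hc2 : ((m + 1 : ℕ) : ℤ) + 1 = ((m : ℕ) : ℤ) + 1 + 1 := by push_cast; ring
      set t : ℤ := (m : ℤ) + 1 with ht
      have e1 : ((m + 1 : ℕ) : ℤ) + 1 = t + 1 := by rw [ht]; push_cast; ring
      have e2 : ((m + 2 : ℕ) : ℤ) + 1 = t + 2 := by rw [ht]; push_cast; ring
      have e3 : ((m : ℕ) : ℤ) + 1 = t := rfl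
      rw [e1, e2]
      have hz : ∀ s : ℤ, a ^ (s + 1) = a ^ s * a := fun s => zpow_add_one₀ ha s
      have hz2 : ∀ s : ℤ, a ^ (s + 2) = a ^ s * a * a := by
        intro s
        rw [show s + 2 = s + 1 + 1 by ring, hz, hz]
      have hneg : ∀ s : ℤ, a ^ (-s) = (a ^ s)⁻¹ := fun s => zpow_neg a s
      rw [hneg (t+1), hneg t, hneg (t+2), hz2, hz]
      have hpow : a ^ t ≠ 0 := zpow_ne_zero t ha
      generalize a ^ t = u at hpow ⊢
      field_simp
      ring


variable {n : ℕ} (x : Fin n → F)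

def Qq (x : Fin n → F) (k : Fin n) : Polynomial F := ∏ i ∈ Finset.univ.erase k, qpoly (x i)

lemma Qq_natDegree (k : Fin n) : (Qq x k).natDegree = 2 * (n - 1) := by
  rw [Qq, Polynomial.natDegree_prod _ _ (fun i _ => (qpoly_monic (x i)).ne_zero)]
  rw [Finset.sum_congr rfl (fun i _ => qpoly_natDegree (x i)), Finset.sum_const,
    Finset.card_erase_of_mem (Finset.mem_univ k), Finset.card_univ, Fintype.card_fin,
    smul_eq_mul, mul_comm]

lemma Qq_reverse (k : Fin n) : (Qq x k).reverse = Qq x k := by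
  refine Finset.prod_induction _ (fun f : Polynomial F => f.reverse = f) (fun f g hf hg => ?_) ?_ (fun i _ => qpoly_reverse (x i))
  · show (f * g).reverse = f * g
    rw [Polynomial.reverse_mul_of_domain, hf, hg]
  · show (1 : Polynomial F).reverse = 1
    rw [← Polynomial.C_1, Polynomial.reverse_C]

lemma Qq_coeff_symm (k : Fin n) {r : ℕ} (hr : r ≤ 2 * (n - 1)) :
    (Qq x k).coeff (2 * (n - 1) - r) = (Qq x k).coeff r := by
  conv_rhs => rw [← Qq_reverse x k]
  rw [Polynomial.coeff_reverse, Qq_natDegree, Polynomial.revAt_le hr]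

lemma Qq_coeff_zero_of_lt (k : Fin n) {r : ℕ} (h : 2 * (n - 1) < r) : (Qq x k).coeff r = 0 :=
  Polynomial.coeff_eq_zero_of_natDegree_lt (by rw [Qq_natDegree]; exact h)

def Ftot (x : Fin n → F) : PowerSeries F := ((pmList x).map (geomInv F)).prod

lemma Ftot_eq : Ftot x = ∏ i, Dk (x i) := by
  rw [Ftot, pmList, List.map_append, List.prod_append, List.map_ofFn, List.map_ofFn,
    List.prod_ofFn, List.prod_ofFn, ← Finset.prod_mul_distrib]
  rfl

lemma key_series (hx : ∀ i, x i ≠ 0) (k : Fin n) :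
    ((Qq x k : Polynomial F) : PowerSeries F) * Ftot x = Dk (x k) := by
  have hcoe : ((Qq x k : Polynomial F) : PowerSeries F)
      = ∏ i ∈ Finset.univ.erase k, ((qpoly (x i) : Polynomial F) : PowerSeries F) := by
    rw [Qq]
    simp only [← Polynomial.coeToPowerSeries.ringHom_apply, map_prod]
  rw [Ftot_eq, ← Finset.mul_prod_erase _ _ (Finset.mem_univ k), hcoe]
  calc (∏ i ∈ Finset.univ.erase k, ((qpoly (x i) : Polynomial F) : PowerSeries F)) *
      (Dk (x k) * ∏ i ∈ Finset.univ.erase k, Dk (x i))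
      = Dk (x k) * ∏ i ∈ Finset.univ.erase k,
          (((qpoly (x i) : Polynomial F) : PowerSeries F) * Dk (x i)) := by
        rw [Finset.prod_mul_distrib]; ring
    _ = Dk (x k) := by
        rw [Finset.prod_congr rfl (fun i _ => qpoly_mul_Dk (x i) (hx i)), Finset.prod_const_one,
          mul_one]

lemma genH_neg (z : ℤ) (hz : z < 0) : genH F (pmList x) z = 0 := by
  rw [genH, if_pos hz]

lemma genH_nat (m : ℕ) : genH F (pmList x) (m : ℤ) = PowerSeries.coeff m (Ftot x) := by
  rw [genH, if_neg (by omega), Int.toNat_natCast]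
  rfl

lemma genH_sub (m r : ℕ) (h : r ≤ m) :
    genH F (pmList x) ((m : ℤ) - r) = PowerSeries.coeff (m - r) (Ftot x) := by
  have : ((m : ℤ) - r) = ((m - r : ℕ) : ℤ) := by
    have := Nat.cast_sub h (R := ℤ); omega
  rw [this, genH_nat]

lemma conv_sum (hx : ∀ i, x i ≠ 0) (k : Fin n) (m : ℕ) :
    ∑ r ∈ Finset.range (2 * (n - 1) + 1), (Qq x k).coeff r * genH F (pmList x) ((m : ℤ) - r)
      = PowerSeries.coeff m (Dk (x k)) := by
  have h1 : PowerSeries.coeff m (((Qq x k : Polynomial F) : PowerSeries F) * Ftot x)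
      = PowerSeries.coeff m (Dk (x k)) := by rw [key_series x hx k]
  rw [PowerSeries.coeff_mul, Finset.Nat.sum_antidiagonal_eq_sum_range_succ_mk] at h1
  have h2 : ∑ r ∈ Finset.range (m + 1),
      PowerSeries.coeff r ((Qq x k : Polynomial F) : PowerSeries F) * PowerSeries.coeff (m - r) (Ftot x)
      = ∑ r ∈ Finset.range (m + 1), (Qq x k).coeff r * genH F (pmList x) ((m : ℤ) - r) := by
    refine Finset.sum_congr rfl fun r hr => ?_
    rw [Finset.mem_range] at hr
    rw [Polynomial.coeff_coe, genH_sub x m r (by omega)]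
  rw [h2] at h1
  set N := max (m + 1) (2 * (n - 1) + 1) with hN
  have e1 : ∑ r ∈ Finset.range (m + 1), (Qq x k).coeff r * genH F (pmList x) ((m : ℤ) - r)
      = ∑ r ∈ Finset.range N, (Qq x k).coeff r * genH F (pmList x) ((m : ℤ) - r) := by
    refine Finset.sum_subset (Finset.range_subset_range.2 (le_max_left _ _)) fun r _ hr => ?_
    rw [Finset.mem_range, not_lt] at hr
    rw [genH_neg x _ (by omega), mul_zero]
  have e2 : ∑ r ∈ Finset.range (2 * (n - 1) + 1), (Qq x k).coeff r * genH F (pmList x) ((m : ℤ) - r)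
      = ∑ r ∈ Finset.range N, (Qq x k).coeff r * genH F (pmList x) ((m : ℤ) - r) := by
    refine Finset.sum_subset (Finset.range_subset_range.2 (le_max_right _ _)) fun r _ hr => ?_
    rw [Finset.mem_range, not_lt] at hr
    rw [Qq_coeff_zero_of_lt x k (by omega), zero_mul]
  rw [e2, ← e1, h1]

lemma fold' (k : Fin n) (s : ℤ) (m : ℕ) (hm : (m : ℤ) = s + n - 1) :
    ∑ r ∈ Finset.range (2 * (n - 1) + 1), (Qq x k).coeff r * genH F (pmList x) ((m : ℤ) - r)
      = ∑ j ∈ Finset.range n,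
          (genH F (pmList x) (s + j) + if 1 ≤ j then genH F (pmList x) (s - j) else 0) *
            (Qq x k).coeff (n - 1 - j) := by
  have hn : 1 ≤ n := Nat.one_le_iff_ne_zero.2 (by rintro rfl; exact absurd k.isLt (by omega))
  rw [show 2 * (n - 1) + 1 = n + (n - 1) by omega, Finset.sum_range_add]
  have S1 : ∑ r ∈ Finset.range n, (Qq x k).coeff r * genH F (pmList x) ((m : ℤ) - r)
      = ∑ j ∈ Finset.range n, genH F (pmList x) (s + j) * (Qq x k).coeff (n - 1 - j) := by
    rw [← Finset.sum_range_reflect (fun r => (Qq x k).coeff r * genH F (pmList x) ((m : ℤ) - r)) n]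
    refine Finset.sum_congr rfl fun j hj => ?_
    rw [Finset.mem_range] at hj
    have e : ((m : ℤ) - ((n - 1 - j : ℕ) : ℤ)) = s + j := by omega
    rw [mul_comm, e]
  have S2 : ∑ r ∈ Finset.range (n - 1), (Qq x k).coeff (n + r) * genH F (pmList x) ((m : ℤ) - (n + r))
      = ∑ j ∈ Finset.range n,
          (if 1 ≤ j then genH F (pmList x) (s - j) else 0) * (Qq x k).coeff (n - 1 - j) := by
    have hr : Finset.range n = Finset.range ((n - 1) + 1) := by congr 1; omega
    rw [hr, Finset.sum_range_succ'
      (fun j => (if 1 ≤ j then genH F (pmList x) (s - j) else 0) * (Qq x k).coeff (n - 1 - j)) (n - 1)]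
    simp only [Nat.not_lt, if_neg (by omega : ¬ (1 ≤ 0))]
    rw [zero_mul, add_zero]
    refine Finset.sum_congr rfl fun r hrr => ?_
    rw [Finset.mem_range] at hrr
    rw [if_pos (by omega)]
    have hpal : (Qq x k).coeff (n + r) = (Qq x k).coeff (2 * (n - 1) - (n + r)) := by
      rw [Qq_coeff_symm x k (by omega)]
    have e : ((m : ℤ) - ((n : ℤ) + (r : ℤ))) = s - ((r + 1 : ℕ) : ℤ) := by push_cast; omega
    rw [hpal, show 2 * (n - 1) - (n + r) = n - 1 - (r + 1) by omega, mul_comm, e]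
  push_cast
  push_cast at S2
  rw [S1, S2, ← Finset.sum_add_distrib]
  refine Finset.sum_congr rfl fun j hj => ?_
  ring

lemma genH_zero : genH F (pmList x) 0 = 1 := by
  have h0 : ((0 : ℕ) : ℤ) = (0 : ℤ) := rfl
  rw [← h0, genH_nat, Ftot_eq, PowerSeries.coeff_zero_eq_constantCoeff, map_prod]
  rw [Finset.prod_congr rfl (fun i _ => ?_), Finset.prod_const_one]
  rw [← PowerSeries.coeff_zero_eq_constantCoeff_apply, Dk_coeff_zero]

lemma entry (hx : ∀ i, x i ≠ 0) (lam : Fin n → ℕ) (k i : Fin n) :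
    ∑ j : Fin n,
      (genH F (pmList x) ((lam i : ℤ) - (i : ℕ) + (j : ℕ)) +
        if 1 ≤ (j : ℕ) then genH F (pmList x) ((lam i : ℤ) - (i : ℕ) - (j : ℕ)) else 0) *
        ((x k - (x k)⁻¹) * (Qq x k).coeff (n - 1 - j))
    = (x k) ^ ((lam i : ℤ) + n - (i : ℕ)) - (x k) ^ (-((lam i : ℤ) + n - (i : ℕ))) := by
  have hi : (i : ℕ) < n := i.isLt
  set s : ℤ := (lam i : ℤ) - (i : ℕ) with hs
  set m : ℕ := lam i + (n - 1 - (i : ℕ)) with hmdef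
  have hm : (m : ℤ) = s + n - 1 := by rw [hmdef, hs]; push_cast [Nat.cast_sub]; omega
  have step1 : ∑ j : Fin n,
      (genH F (pmList x) (s + (j : ℕ)) +
        if 1 ≤ (j : ℕ) then genH F (pmList x) (s - (j : ℕ)) else 0) *
        ((x k - (x k)⁻¹) * (Qq x k).coeff (n - 1 - j))
      = (x k - (x k)⁻¹) * ∑ j ∈ Finset.range n,
          (genH F (pmList x) (s + j) + if 1 ≤ j then genH F (pmList x) (s - j) else 0) *
            (Qq x k).coeff (n - 1 - j) := by
    rw [Finset.mul_sum, ← Fin.sum_univ_eq_sum_range (fun j =>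
      (x k - (x k)⁻¹) * ((genH F (pmList x) (s + j) + if 1 ≤ j then genH F (pmList x) (s - j) else 0) *
        (Qq x k).coeff (n - 1 - j))) n]
    exact Finset.sum_congr rfl fun j _ => by ring
  rw [step1, ← fold' x k s m hm, conv_sum x hx k m]
  have he : (m : ℤ) + 1 = (lam i : ℤ) + n - (i : ℕ) := by omega
  rw [Dk_coeff_closed (x k) (hx k) m, he]

theorem symplectic_bialternant_eq_jacobiTrudi'
    (hx : ∀ i, x i ≠ 0)
    (lam : Fin n → ℕ)
    (hden : Matrix.det (Matrix.of fun i j : Fin n =>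
      (x i) ^ ((n : ℤ) - (j : ℕ)) - (x i) ^ (-((n : ℤ) - (j : ℕ)))) ≠ 0) :
    Matrix.det (Matrix.of fun i j : Fin n =>
        (x i) ^ ((lam j : ℤ) + n - (j : ℕ)) - (x i) ^ (-((lam j : ℤ) + n - (j : ℕ)))) /
      Matrix.det (Matrix.of fun i j : Fin n =>
        (x i) ^ ((n : ℤ) - (j : ℕ)) - (x i) ^ (-((n : ℤ) - (j : ℕ)))) =
    spJT F (genH F (pmList x)) n (fun i => (lam i : ℤ)) := by
  classical
  set M : Matrix (Fin n) (Fin n) F := Matrix.of fun i j : Fin n =>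
    genH F (pmList x) ((lam i : ℤ) - (i : ℕ) + (j : ℕ)) +
      if 1 ≤ (j : ℕ) then genH F (pmList x) ((lam i : ℤ) - (i : ℕ) - (j : ℕ)) else 0 with hM
  set M0 : Matrix (Fin n) (Fin n) F := Matrix.of fun i j : Fin n =>
    genH F (pmList x) ((0 : ℤ) - (i : ℕ) + (j : ℕ)) +
      if 1 ≤ (j : ℕ) then genH F (pmList x) ((0 : ℤ) - (i : ℕ) - (j : ℕ)) else 0 with hM0
  set B : Matrix (Fin n) (Fin n) F := Matrix.of fun j k : Fin n =>
    (x k - (x k)⁻¹) * (Qq x k).coeff (n - 1 - j) with hB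
  set A : Matrix (Fin n) (Fin n) F := Matrix.of fun i j : Fin n =>
    (x i) ^ ((lam j : ℤ) + n - (j : ℕ)) - (x i) ^ (-((lam j : ℤ) + n - (j : ℕ))) with hA
  set A0 : Matrix (Fin n) (Fin n) F := Matrix.of fun i j : Fin n =>
    (x i) ^ ((n : ℤ) - (j : ℕ)) - (x i) ^ (-((n : ℤ) - (j : ℕ))) with hA0
  have hMB : M * B = A.transpose := by
    ext i k
    rw [Matrix.mul_apply]
    simp only [hM, hB, hA, Matrix.of_apply, Matrix.transpose_apply]
    exact entry x hx lam k i
  have hM0B : M0 * B = A0.transpose := by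
    ext i k
    rw [Matrix.mul_apply]
    simp only [hM0, hB, hA0, Matrix.of_apply, Matrix.transpose_apply]
    have := entry x hx (fun _ => 0) k i
    simp only [Nat.cast_zero, zero_add] at this
    exact this
  have hdetA : A.det = M.det * B.det := by
    rw [← Matrix.det_mul, hMB, Matrix.det_transpose]
  have hdetA0 : A0.det = M0.det * B.det := by
    rw [← Matrix.det_mul, hM0B, Matrix.det_transpose]
  have hM0tri : M0.BlockTriangular id := by
    intro i j hij
    have hij' : (j : ℕ) < (i : ℕ) := hij
    simp only [hM0, Matrix.of_apply]
    rw [genH_neg x _ (by omega), zero_add]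
    split_ifs with h1
    · exact genH_neg x _ (by omega)
    · rfl
  have hdetM0 : M0.det = 1 := by
    rw [Matrix.det_of_upperTriangular hM0tri]
    apply Finset.prod_eq_one
    intro i _
    simp only [hM0, Matrix.of_apply]
    rw [show ((0 : ℤ) - ((i:ℕ):ℤ) + ((i:ℕ):ℤ)) = 0 by ring, genH_zero]
    have : (if 1 ≤ (i : ℕ) then genH F (pmList x) ((0:ℤ) - (i : ℕ) - (i : ℕ)) else 0) = 0 := by
      split_ifs with h1
      · exact genH_neg x _ (by omega)
      · rfl
    rw [this, add_zero]
  have hBdet : B.det ≠ 0 := by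
    intro h0
    apply hden
    show A0.det = 0
    rw [hdetA0, h0, mul_zero]
  show A.det / A0.det = _
  rw [hdetA, hdetA0, hdetM0, one_mul, mul_div_assoc, div_self hBdet, mul_one]
  rfl

end SpAux

/-- **Bialternant = Jacobi–Trudi for symplectic Schur functions.**
For a partition `λ` with at most `n` parts (with nonvanishing Weyl denominator),
`det(x_i^{λ_j+n−j+1} − x_i^{−(λ_j+n−j+1)}) / det(x_i^{n−j+1} − x_i^{−(n−j+1)})
 = det( h_{λ_i−i+j}(x^±) + [j>1] h_{λ_i−i−j+2}(x^±) )`. -/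
theorem symplectic_bialternant_eq_jacobiTrudi {F : Type*} [Field F] {n : ℕ}
    (x : Fin n → F) (hx : ∀ i, x i ≠ 0)
    (lam : Fin n → ℕ) (hlam : Antitone lam)
    (hden : Matrix.det (Matrix.of fun i j : Fin n =>
      (x i) ^ ((n : ℤ) - (j : ℕ)) - (x i) ^ (-((n : ℤ) - (j : ℕ)))) ≠ 0) :
    Matrix.det (Matrix.of fun i j : Fin n =>
        (x i) ^ ((lam j : ℤ) + n - (j : ℕ)) - (x i) ^ (-((lam j : ℤ) + n - (j : ℕ)))) /
      Matrix.det (Matrix.of fun i j : Fin n =>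
        (x i) ^ ((n : ℤ) - (j : ℕ)) - (x i) ^ (-((n : ℤ) - (j : ℕ)))) =
    spJT F (genH F (pmList x)) n (fun i => (lam i : ℤ)) := by
  exact symplectic_bialternant_eq_jacobiTrudi' x hx lam hden
end
end

section
/- For a partition λ = (λ_1,…,λ_l) with λ_l = 0, the even orthogonal character bialternant formula equals the determinant det(x_i^{λ_j+l−j} + x_i^{−(λ_j+l−j)})_{i,j=1}^l / det(x_i^{l−j} + x_i^{−(l−j)})_{i,j=1}^l = det( h_{λ_i−i+j}(x^±) − h_{λ_i−i−j}(x^±) )_{i,j=1}^l. -/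
open scoped BigOperators
noncomputable section

open Polynomial

namespace OBJT

variable {R : Type*} [CommRing R]

lemma geom_mul (a : R) : (1 - PowerSeries.C a * PowerSeries.X) * geomInv R a = 1 := by
  apply PowerSeries.mul_invOfUnit; simp

lemma geomInv_eq_mk (a : R) : geomInv R a = PowerSeries.mk fun n => a ^ n := by
  have h2 : (1 - PowerSeries.C a * PowerSeries.X) * PowerSeries.mk (fun n => a ^ n) = 1 := by
    ext n
    rw [sub_mul, one_mul, PowerSeries.coeff_one, map_sub]
    cases n with
    | zero => simp
    | succ n =>
      rw [mul_assoc, PowerSeries.coeff_C_mul, PowerSeries.coeff_succ_X_mul]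
      simp [pow_succ, mul_comm]
  calc geomInv R a = geomInv R a * ((1 - PowerSeries.C a * PowerSeries.X) * PowerSeries.mk fun n => a ^ n) := by rw [h2, mul_one]
  _ = ((1 - PowerSeries.C a * PowerSeries.X) * geomInv R a) * PowerSeries.mk (fun n => a^n) := by ring
  _ = _ := by rw [geom_mul, one_mul]

lemma coeff_geomInv (a : R) (n : ℕ) : PowerSeries.coeff n (geomInv R a) = a ^ n := by
  rw [geomInv_eq_mk]; simp

lemma reflect_prod {ι : Type*} (s : Finset ι) (q : ι → R[X])
    (hd : ∀ i ∈ s, (q i).natDegree ≤ 2) (hr : ∀ i ∈ s, (q i).reflect 2 = q i) :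
    (∏ i ∈ s, q i).reflect (2 * s.card) = ∏ i ∈ s, q i := by
  induction s using Finset.cons_induction with
  | empty => simp [Polynomial.reflect_one]
  | cons a s ha ih =>
    rw [Finset.prod_cons, Finset.card_cons, Nat.mul_add, Nat.mul_one, add_comm (2*s.card) 2]
    rw [Polynomial.reflect_mul _ _ (hd a (by simp)) ?_]
    · rw [hr a (by simp), ih (fun i hi => hd i (by simp [hi])) (fun i hi => hr i (by simp [hi]))]
    · calc (∏ i ∈ s, q i).natDegree ≤ ∑ i ∈ s, (q i).natDegree := Polynomial.natDegree_prod_le _ _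
      _ ≤ ∑ _i ∈ s, 2 := Finset.sum_le_sum (fun i hi => hd i (by simp [hi]))
      _ = 2 * s.card := by rw [Finset.sum_const, smul_eq_mul, mul_comm]

variable {F : Type*} [Field F]

def qp (a : F) : F[X] := (1 - Polynomial.C a * Polynomial.X) * (1 - Polynomial.C a⁻¹ * Polynomial.X)

lemma qp_eq (a : F) (ha : a ≠ 0) : qp a = 1 - Polynomial.C (a + a⁻¹) * Polynomial.X + Polynomial.X ^ 2 := by
  unfold qp
  have h1 : (Polynomial.C a : F[X]) * Polynomial.C a⁻¹ = 1 := by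
    rw [← Polynomial.C_mul, mul_inv_cancel₀ ha]; simp
  have h2 : (Polynomial.C (a + a⁻¹) : F[X]) = Polynomial.C a + Polynomial.C a⁻¹ := by
    rw [Polynomial.C_add]
  rw [h2]
  linear_combination (Polynomial.X^2 : F[X]) * h1

lemma qp_natDegree_le (a : F) : (qp a).natDegree ≤ 2 := by
  unfold qp
  apply le_trans (Polynomial.natDegree_mul_le)
  have h : ∀ b : F, (1 - Polynomial.C b * Polynomial.X).natDegree ≤ 1 := fun b => by
    apply le_trans (Polynomial.natDegree_sub_le _ _)
    simpa using le_trans (Polynomial.natDegree_mul_le) (by simp)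
  have := h a; have := h a⁻¹; omega

lemma qp_reflect (a : F) (ha : a ≠ 0) : (qp a).reflect 2 = qp a := by
  rw [qp_eq a ha]
  ext k
  rw [Polynomial.coeff_reflect]
  rcases k with _|_|_|k
  · simp [Polynomial.revAt_le, coeff_one, Polynomial.coeff_X_pow]
  · simp [Polynomial.revAt_le, coeff_one, Polynomial.coeff_X_pow]
  · simp [Polynomial.revAt_le, coeff_one, Polynomial.coeff_X_pow]
  · rw [Polynomial.revAt_eq_self_of_lt (by omega)]

lemma decomp {l : ℕ} (hl : 0 < l) (G : F[X]) (hdeg : G.natDegree ≤ 2*l)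
    (hmid : G.coeff l = 0) (hanti : ∀ k ≤ 2*l, G.coeff (2*l - k) = -G.coeff k) :
    G = ∑ c : Fin l, Polynomial.C (G.coeff (l-1-(c:ℕ))) *
      (Polynomial.X^(l-1-(c:ℕ)) - Polynomial.X^(l+1+(c:ℕ))) := by
  ext k
  simp only [Polynomial.finset_sum_coeff, Polynomial.coeff_C_mul, Polynomial.coeff_sub,
    Polynomial.coeff_C_mul, Polynomial.coeff_X_pow]
  by_cases hk : k < l
  · rw [Finset.sum_eq_single (⟨l-1-k, by omega⟩ : Fin l)]
    · rw [if_pos (by simp only [Fin.val_mk]; omega), if_neg (by simp only [Fin.val_mk]; omega)]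
      simp only [mul_zero, sub_zero, mul_one, Fin.val_mk]
      congr 1; omega
    · intro b _ hb
      have hb' : (b:ℕ) ≠ l-1-k := fun h => hb (Fin.ext (by simp [h]))
      rw [if_neg (by omega), if_neg (by omega)]; ring
    · simp
  · by_cases hk2 : k = l
    · rw [hk2, hmid]
      apply (Finset.sum_eq_zero _).symm
      intro b _
      rw [if_neg (by omega), if_neg (by omega)]; ring
    · by_cases hk3 : k ≤ 2*l
      · rw [Finset.sum_eq_single (⟨k-l-1, by omega⟩ : Fin l)]
        · rw [if_neg (by simp only [Fin.val_mk]; omega), if_pos (by simp only [Fin.val_mk]; omega)]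
          simp only [Fin.val_mk]
          have h2 : l - 1 - (k-l-1) = 2*l - k := by omega
          rw [h2]
          have h3 := hanti (2*l-k) (by omega)
          have h4 : 2*l - (2*l-k) = k := by omega
          rw [h4] at h3
          rw [h3]; ring
        · intro b _ hb
          have hb' : (b:ℕ) ≠ k-l-1 := fun h => hb (Fin.ext (by simp [h]))
          rw [if_neg (by omega), if_neg (by omega)]; ring
        · simp
      · rw [Polynomial.coeff_eq_zero_of_natDegree_lt (by omega)]
        apply (Finset.sum_eq_zero _).symm
        intro b _
        rw [if_neg (by omega), if_neg (by omega)]; ring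

variable {l : ℕ} (x : Fin l → F)

def Qpoly (j : Fin l) : F[X] := ∏ i ∈ Finset.univ.erase j, qp (x i)
def Gpoly (j : Fin l) : F[X] := (1 - Polynomial.X^2) * Qpoly x j

def Hs : PowerSeries F := ((pmList x).map (geomInv F)).prod

lemma Hs_eq : Hs x = ∏ i : Fin l, (geomInv F (x i) * geomInv F ((x i)⁻¹)) := by
  unfold Hs pmList
  rw [List.map_append, List.prod_append, List.map_ofFn, List.map_ofFn,
    List.prod_ofFn, List.prod_ofFn, ← Finset.prod_mul_distrib]
  rfl

lemma cancel_pair (a : F) :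
    (geomInv F a * geomInv F a⁻¹) * ((qp a : F[X]) : PowerSeries F) = 1 := by
  unfold qp
  push_cast
  calc geomInv F a * geomInv F a⁻¹ *
      ((1 - PowerSeries.C a * PowerSeries.X) * (1 - PowerSeries.C a⁻¹ * PowerSeries.X))
      = ((1 - PowerSeries.C a * PowerSeries.X) * geomInv F a) *
        ((1 - PowerSeries.C a⁻¹ * PowerSeries.X) * geomInv F a⁻¹) := by ring
  _ = 1 := by rw [geom_mul, geom_mul, one_mul]

lemma HE : Hs x * ((∏ i : Fin l, qp (x i) : F[X]) : PowerSeries F) = 1 := by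
  rw [Hs_eq, ← Polynomial.coeToPowerSeries.ringHom_apply, map_prod, ← Finset.prod_mul_distrib]
  apply Finset.prod_eq_one
  intro i _
  rw [Polynomial.coeToPowerSeries.ringHom_apply]
  exact cancel_pair (x i)

lemma S_qp (a : F) (ha : a ≠ 0) :
    (geomInv F a + geomInv F a⁻¹ - 1) * ((qp a : F[X]) : PowerSeries F)
      = 1 - PowerSeries.X^2 := by
  unfold qp
  push_cast
  have hab : PowerSeries.C a * PowerSeries.C a⁻¹ = 1 := by
    rw [← map_mul, mul_inv_cancel₀ ha, map_one]
  linear_combination ((1 - PowerSeries.C a⁻¹ * PowerSeries.X) * geom_mul (R := F) a)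
    + ((1 - PowerSeries.C a * PowerSeries.X) * geom_mul (R := F) a⁻¹)
    - PowerSeries.X^2 * hab

lemma main_id (hx : ∀ i, x i ≠ 0) (j : Fin l) :
    Hs x * ((Gpoly x j : F[X]) : PowerSeries F)
      = geomInv F (x j) + geomInv F ((x j)⁻¹) - 1 := by
  have hsplit : (∏ i : Fin l, qp (x i)) = qp (x j) * Qpoly x j :=
    (Finset.mul_prod_erase Finset.univ _ (Finset.mem_univ j)).symm
  have h1 := HE x
  rw [hsplit] at h1
  have h2 := S_qp (x j) (hx j)
  unfold Gpoly
  calc Hs x * ((((1 - Polynomial.X^2) * Qpoly x j : F[X])) : PowerSeries F)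
      = Hs x * ((1 - PowerSeries.X^2) * (Qpoly x j : PowerSeries F)) := by
        simp only [Polynomial.coe_mul, Polynomial.coe_sub, Polynomial.coe_one,
          Polynomial.coe_pow, Polynomial.coe_X]
  _ = (geomInv F (x j) + geomInv F ((x j)⁻¹) - 1) *
        (Hs x * (((qp (x j) : F[X]) : PowerSeries F) * (Qpoly x j : PowerSeries F))) := by
        rw [← h2]; ring
  _ = _ := by rw [← Polynomial.coe_mul, h1, mul_one]


lemma Qpoly_natDegree_le (j : Fin l) : (Qpoly x j).natDegree ≤ 2*(l-1) := by
  unfold Qpoly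
  calc (∏ i ∈ Finset.univ.erase j, qp (x i)).natDegree
      ≤ ∑ i ∈ Finset.univ.erase j, (qp (x i)).natDegree := Polynomial.natDegree_prod_le _ _
  _ ≤ ∑ _i ∈ Finset.univ.erase j, 2 := Finset.sum_le_sum (fun i _ => qp_natDegree_le (x i))
  _ = 2*(l-1) := by
      rw [Finset.sum_const, smul_eq_mul, Finset.card_erase_of_mem (Finset.mem_univ j)]
      simp [mul_comm]

lemma Qpoly_reflect (hx : ∀ i, x i ≠ 0) (j : Fin l) :
    (Qpoly x j).reflect (2*(l-1)) = Qpoly x j := by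
  unfold Qpoly
  have h := reflect_prod (Finset.univ.erase j) (fun i => qp (x i))
    (fun i _ => qp_natDegree_le (x i)) (fun i _ => qp_reflect (x i) (hx i))
  rwa [Finset.card_erase_of_mem (Finset.mem_univ j), Finset.card_univ, Fintype.card_fin] at h

lemma Gpoly_natDegree_le (hl : 0 < l) (j : Fin l) : (Gpoly x j).natDegree ≤ 2*l := by
  unfold Gpoly
  apply le_trans (Polynomial.natDegree_mul_le)
  have h1 : (1 - Polynomial.X^2 : F[X]).natDegree ≤ 2 := by
    apply le_trans (Polynomial.natDegree_sub_le _ _); simp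
  have := Qpoly_natDegree_le x j
  omega

lemma reflect_one_sub_X_sq : (1 - Polynomial.X^2 : F[X]).reflect 2 = -(1 - Polynomial.X^2) := by
  ext k
  rw [Polynomial.coeff_reflect]
  rcases k with _|_|_|k
  · simp [Polynomial.revAt_le, Polynomial.coeff_X_pow, Polynomial.coeff_one]
  · simp [Polynomial.revAt_le, Polynomial.coeff_X_pow, Polynomial.coeff_one]
  · simp [Polynomial.revAt_le, Polynomial.coeff_X_pow, Polynomial.coeff_one]
  · rw [Polynomial.revAt_eq_self_of_lt (by omega)]
    simp [Polynomial.coeff_X_pow, Polynomial.coeff_one]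

lemma Gpoly_reflect (hx : ∀ i, x i ≠ 0) (hl : 0 < l) (j : Fin l) :
    (Gpoly x j).reflect (2*l) = -(Gpoly x j) := by
  unfold Gpoly
  have h2l : 2*l = 2 + 2*(l-1) := by omega
  rw [h2l, Polynomial.reflect_mul _ _ (by
      apply le_trans (Polynomial.natDegree_sub_le _ _); simp) (Qpoly_natDegree_le x j),
    reflect_one_sub_X_sq, Qpoly_reflect x hx j]
  ring

lemma Gpoly_anti (hx : ∀ i, x i ≠ 0) (hl : 0 < l) (j : Fin l) :
    ∀ k ≤ 2*l, (Gpoly x j).coeff (2*l - k) = -(Gpoly x j).coeff k := by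
  intro k hk
  have h := congrArg (fun p => Polynomial.coeff p k) (Gpoly_reflect x hx hl j)
  simp only [Polynomial.coeff_reflect, Polynomial.coeff_neg] at h
  rwa [Polynomial.revAt_le hk] at h

lemma Gpoly_mid (hx : ∀ i, x i ≠ 0) (hl : 0 < l) (j : Fin l) :
    (Gpoly x j).coeff l = 0 := by
  have hG : Gpoly x j = Qpoly x j - Qpoly x j * Polynomial.X^2 := by unfold Gpoly; ring
  rw [hG, Polynomial.coeff_sub, Polynomial.coeff_mul_X_pow']
  rcases Nat.lt_or_ge l 2 with h2 | h2
  · have hl1 : l = 1 := by omega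
    subst hl1
    rw [if_neg (by omega), sub_zero]
    have hQ : Qpoly x j = 1 := by
      unfold Qpoly
      have he : Finset.univ.erase j = (∅ : Finset (Fin 1)) := by
        apply Finset.eq_empty_of_forall_notMem
        intro i hi
        exact (Finset.mem_erase.mp hi).1 (Subsingleton.elim i j)
      rw [he, Finset.prod_empty]
    rw [hQ, Polynomial.coeff_one]; simp
  · rw [if_pos (by omega)]
    have h := congrArg (fun p => Polynomial.coeff p (l-2)) (Qpoly_reflect x hx j)
    simp only [Polynomial.coeff_reflect] at h
    rw [Polynomial.revAt_le (by omega)] at h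
    have : 2*(l-1) - (l-2) = l := by omega
    rw [this] at h
    rw [← h, sub_self]

lemma Gpoly_coeff_zero (j : Fin l) : (Gpoly x j).coeff 0 = 1 := by
  rw [Polynomial.coeff_zero_eq_eval_zero]
  unfold Gpoly Qpoly qp
  simp [Polynomial.eval_prod]

lemma genH_pos (m : ℕ) (d : ℕ) :
    genH F (pmList x) ((m:ℤ) - (d:ℕ)) = if d ≤ m then PowerSeries.coeff (m - d) (Hs x) else 0 := by
  unfold genH Hs
  by_cases hcond : d ≤ m
  · rw [if_pos hcond, if_neg (by omega)]
    have ht : ((m:ℤ) - (d:ℤ)).toNat = m - d := by omega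
    rw [ht]
  · rw [if_neg hcond, if_pos (by omega)]

lemma entry (hx : ∀ i, x i ≠ 0) (hl : 0 < l) (m : ℕ) (j : Fin l) :
    (x j)^m + ((x j)⁻¹)^m
      = (if m = 0 then 1 else 0) +
        ∑ c : Fin l, (genH F (pmList x) ((m:ℤ) - (l:ℕ) + 1 + (c:ℕ)) -
          genH F (pmList x) ((m:ℤ) - (l:ℕ) + 1 - (c:ℕ) - 2)) * (Gpoly x j).coeff (l-1-(c:ℕ)) := by
  have hdec := decomp hl (Gpoly x j) (Gpoly_natDegree_le x hl j) (Gpoly_mid x hx hl j)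
    (Gpoly_anti x hx hl j)
  have hm := main_id x hx j
  rw [hdec] at hm
  have hm2 := congrArg (PowerSeries.coeff m) hm
  rw [map_sub, map_add, coeff_geomInv, coeff_geomInv, PowerSeries.coeff_one] at hm2
  have hsum : (PowerSeries.coeff m) (Hs x *
      ((∑ c : Fin l, Polynomial.C ((Gpoly x j).coeff (l - 1 - (c:ℕ))) *
        (Polynomial.X ^ (l - 1 - (c:ℕ)) - Polynomial.X ^ (l + 1 + (c:ℕ))) : F[X]) : PowerSeries F))
      = ∑ c : Fin l, (genH F (pmList x) ((m:ℤ) - (l:ℕ) + 1 + (c:ℕ)) -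
          genH F (pmList x) ((m:ℤ) - (l:ℕ) + 1 - (c:ℕ) - 2)) * (Gpoly x j).coeff (l-1-(c:ℕ)) := by
    rw [← Polynomial.coeToPowerSeries.ringHom_apply, map_sum, Finset.mul_sum, map_sum]
    apply Finset.sum_congr rfl
    intro c _
    simp only [map_mul, map_sub, map_pow, Polynomial.coeToPowerSeries.ringHom_apply,
      Polynomial.coe_C, Polynomial.coe_X]
    have hre : Hs x * (PowerSeries.C ((Gpoly x j).coeff (l-1-(c:ℕ))) *
        (PowerSeries.X^(l-1-(c:ℕ)) - PowerSeries.X^(l+1+(c:ℕ))))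
        = PowerSeries.C ((Gpoly x j).coeff (l-1-(c:ℕ))) *
          (Hs x * PowerSeries.X^(l-1-(c:ℕ)) - Hs x * PowerSeries.X^(l+1+(c:ℕ))) := by ring
    rw [hre, PowerSeries.coeff_C_mul, map_sub, PowerSeries.coeff_mul_X_pow',
      PowerSeries.coeff_mul_X_pow']
    have hA : genH F (pmList x) ((m:ℤ) - (l:ℕ) + 1 + (c:ℕ))
        = if l-1-(c:ℕ) ≤ m then PowerSeries.coeff (m - (l-1-(c:ℕ))) (Hs x) else 0 := by
      have h := genH_pos x m (l-1-(c:ℕ))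
      have hc : (c:ℕ) < l := c.isLt
      have : (m:ℤ) - (l:ℕ) + 1 + (c:ℕ) = (m:ℤ) - ((l-1-(c:ℕ) : ℕ) : ℤ) := by
        omega
      rw [this, h]
    have hB : genH F (pmList x) ((m:ℤ) - (l:ℕ) + 1 - (c:ℕ) - 2)
        = if l+1+(c:ℕ) ≤ m then PowerSeries.coeff (m - (l+1+(c:ℕ))) (Hs x) else 0 := by
      have h := genH_pos x m (l+1+(c:ℕ))
      have : (m:ℤ) - (l:ℕ) + 1 - (c:ℕ) - 2 = (m:ℤ) - ((l+1+(c:ℕ) : ℕ) : ℤ) := by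
        push_cast; ring
      rw [this, h]
    rw [hA, hB]
    ring
  linear_combination hsum - hm2

lemma genH_neg (xs : List F) (k : ℤ) (hk : k < 0) : genH F xs k = 0 := by
  unfold genH; rw [if_pos hk]

lemma genH_zero : genH F (pmList x) 0 = 1 := by
  unfold genH
  rw [if_neg (by omega)]
  show PowerSeries.coeff 0 (Hs x) = 1
  rw [Hs_eq, PowerSeries.coeff_zero_eq_constantCoeff, map_prod]
  apply Finset.prod_eq_one
  intro i _
  rw [map_mul]
  have hc : ∀ a : F, PowerSeries.constantCoeff (geomInv F a) = 1 := by
    intro a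
    rw [geomInv_eq_mk]
    simp
  rw [hc, hc, mul_one]

def Emat : Matrix (Fin l) (Fin l) F := Matrix.of fun c j => (Gpoly x j).coeff (l-1-(c:ℕ))

def Tmat (μ : Fin l → ℕ) : Matrix (Fin l) (Fin l) F := Matrix.of fun i c =>
  genH F (pmList x) ((μ i:ℤ) - (l:ℕ) + 1 + (c:ℕ)) -
    genH F (pmList x) ((μ i:ℤ) - (l:ℕ) + 1 - (c:ℕ) - 2)

lemma TE_row (hl : 0 < l) (μ : Fin l → ℕ) (i j : Fin l) (hμ : μ i = 0) :
    (Tmat x μ * Emat x) i j = 1 := by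
  rw [Matrix.mul_apply]
  rw [Finset.sum_eq_single (⟨l-1, by omega⟩ : Fin l)]
  · simp only [Tmat, Emat, Matrix.of_apply, hμ, Fin.val_mk]
    rw [show ((0:ℕ):ℤ) - (l:ℕ) + 1 + ((l-1:ℕ):ℤ) = 0 by omega]
    rw [genH_zero, genH_neg _ _ (by omega), Nat.sub_self, Gpoly_coeff_zero]
    ring
  · intro c _ hc
    have hc' : (c:ℕ) < l - 1 := by
      have := c.isLt
      have : (c:ℕ) ≠ l-1 := fun h => hc (Fin.ext (by simp [h]))
      omega
    simp only [Tmat, Emat, Matrix.of_apply, hμ]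
    rw [genH_neg _ _ (by omega), genH_neg _ _ (by omega)]
    ring
  · simp

lemma Nfact (hx : ∀ i, x i ≠ 0) (hl : 0 < l) (μ : Fin l → ℕ) :
    (Matrix.of fun i j : Fin l => (x j)^(μ i) + ((x j)⁻¹)^(μ i))
      = Matrix.of fun i j : Fin l =>
        (if μ i = 0 then (2:F) else 1) * ((Tmat x μ * Emat x) i j) := by
  ext i j
  simp only [Matrix.of_apply]
  rw [entry x hx hl (μ i) j]
  have hTE : (Tmat x μ * Emat x) i j
      = ∑ c : Fin l, (genH F (pmList x) (((μ i:ℕ):ℤ) - (l:ℕ) + 1 + (c:ℕ)) -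
          genH F (pmList x) (((μ i:ℕ):ℤ) - (l:ℕ) + 1 - (c:ℕ) - 2)) *
            (Gpoly x j).coeff (l-1-(c:ℕ)) := by
    rw [Matrix.mul_apply]; rfl
  by_cases hμ : μ i = 0
  · rw [if_pos hμ, if_pos hμ, TE_row x hl μ i j hμ, ← hTE, TE_row x hl μ i j hμ, mul_one]
    norm_num
  · rw [if_neg hμ, if_neg hμ, ← hTE, one_mul, zero_add]

lemma detN (hx : ∀ i, x i ≠ 0) (hl : 0 < l) (μ : Fin l → ℕ) :
    Matrix.det (Matrix.of fun i j : Fin l => (x j)^(μ i) + ((x j)⁻¹)^(μ i))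
      = (∏ i : Fin l, if μ i = 0 then (2:F) else 1) *
        (Matrix.det (Tmat x μ) * Matrix.det (Emat x)) := by
  rw [Nfact x hx hl μ, Matrix.det_mul_column, Matrix.det_mul]

lemma detT0 (_hl : 0 < l) : Matrix.det (Tmat x (fun i => l-1-(i:ℕ))) = 1 := by
  have htri : (Tmat x (fun i => l-1-(i:ℕ))).BlockTriangular id := by
    intro i j hij
    simp only [id] at hij
    have hij' : (j:ℕ) < (i:ℕ) := hij
    simp only [Tmat, Matrix.of_apply]
    have hi := i.isLt
    rw [genH_neg _ _ (by omega), genH_neg _ _ (by omega)]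
    ring
  rw [Matrix.det_of_upperTriangular htri]
  apply Finset.prod_eq_one
  intro i _
  simp only [Tmat, Matrix.of_apply]
  have hi := i.isLt
  rw [show (((l-1-(i:ℕ):ℕ)):ℤ) - (l:ℕ) + 1 + ((i:ℕ):ℤ) = 0 by omega]
  rw [genH_zero, genH_neg _ _ (by omega)]
  ring

end OBJT

/-- **Bialternant = Jacobi–Trudi for even orthogonal characters.**
For a partition `λ = (λ_1,…,λ_l)` with `λ_l = 0` (with nonvanishing denominator),
`det(x_i^{λ_j+l−j} + x_i^{−(λ_j+l−j)}) / det(x_i^{l−j} + x_i^{−(l−j)})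
 = det( h_{λ_i−i+j}(x^±) − h_{λ_i−i−j}(x^±) )`. -/
theorem orthogonal_bialternant_eq_jacobiTrudi {F : Type*} [Field F] {l : ℕ}
    (x : Fin l → F) (hx : ∀ i, x i ≠ 0)
    (lam : Fin l → ℕ) (hlam : Antitone lam)
    (hlast : ∀ h : 0 < l, lam ⟨l - 1, by omega⟩ = 0)
    (hden : Matrix.det (Matrix.of fun i j : Fin l =>
      (x i) ^ ((l : ℤ) - (j : ℕ) - 1) + (x i) ^ (-((l : ℤ) - (j : ℕ) - 1))) ≠ 0) :
    Matrix.det (Matrix.of fun i j : Fin l =>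
        (x i) ^ ((lam j : ℤ) + l - (j : ℕ) - 1) +
          (x i) ^ (-((lam j : ℤ) + l - (j : ℕ) - 1))) /
      Matrix.det (Matrix.of fun i j : Fin l =>
        (x i) ^ ((l : ℤ) - (j : ℕ) - 1) + (x i) ^ (-((l : ℤ) - (j : ℕ) - 1))) =
    oJT F (genH F (pmList x)) l (fun i => (lam i : ℤ)) := by
  rcases Nat.eq_zero_or_pos l with hl0 | hl
  · subst hl0
    simp [oJT, Matrix.det_isEmpty]
  -- the partition shifted by the staircase
  set μ : Fin l → ℕ := fun i => lam i + (l - 1 - (i:ℕ)) with hμdef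
  set μ0 : Fin l → ℕ := fun i => l - 1 - (i:ℕ) with hμ0def
  -- rewrite the numerator as a transpose of a `pow` matrix
  have hzp : ∀ (a : F) (_ : a ≠ 0) (e : ℤ) (n : ℕ) (_ : e = (n:ℤ)),
      a ^ e + a ^ (-e) = a ^ n + (a⁻¹) ^ n := by
    intro a ha e n he
    rw [he, zpow_natCast, zpow_neg, zpow_natCast, inv_pow]
  have hnum : (Matrix.of fun i j : Fin l =>
        (x i) ^ ((lam j : ℤ) + l - (j : ℕ) - 1) +
          (x i) ^ (-((lam j : ℤ) + l - (j : ℕ) - 1)))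
      = (Matrix.of fun i j : Fin l => (x j)^(μ i) + ((x j)⁻¹)^(μ i)).transpose := by
    ext i j
    simp only [Matrix.transpose_apply, Matrix.of_apply]
    apply hzp (x i) (hx i)
    have hj := j.isLt
    simp only [hμdef]
    omega
  have hden' : (Matrix.of fun i j : Fin l =>
        (x i) ^ ((l : ℤ) - (j : ℕ) - 1) + (x i) ^ (-((l : ℤ) - (j : ℕ) - 1)))
      = (Matrix.of fun i j : Fin l => (x j)^(μ0 i) + ((x j)⁻¹)^(μ0 i)).transpose := by
    ext i j
    simp only [Matrix.transpose_apply, Matrix.of_apply]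
    apply hzp (x i) (hx i)
    have hj := j.isLt
    simp only [hμ0def]
    omega
  have hdetnum := OBJT.detN x hx hl μ
  have hdetden := OBJT.detN x hx hl μ0
  -- the products of twos
  have hone : ∀ μ' : Fin l → ℕ, (∀ i : Fin l, μ' i = 0 ↔ i = (⟨l-1, by omega⟩ : Fin l)) →
      (∏ i : Fin l, if μ' i = 0 then (2:F) else 1) = 2 := by
    intro μ' hiff
    have : (∏ i : Fin l, if μ' i = 0 then (2:F) else 1)
        = ∏ i : Fin l, if i = (⟨l-1, by omega⟩ : Fin l) then (2:F) else 1 := by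
      apply Finset.prod_congr rfl
      intro i _
      exact if_congr (hiff i) rfl rfl
    rw [this, Finset.prod_ite_eq' Finset.univ _ (fun _ => (2:F)),
      if_pos (Finset.mem_univ _)]
  have hμiff : ∀ i : Fin l, μ i = 0 ↔ i = (⟨l-1, by omega⟩ : Fin l) := by
    intro i
    constructor
    · intro h0
      have hi := i.isLt
      apply Fin.ext
      simp only [hμdef] at h0
      simp only [Fin.val_mk]
      omega
    · rintro rfl
      simp only [hμdef, Fin.val_mk]
      rw [hlast hl]
      omega
  have hμ0iff : ∀ i : Fin l, μ0 i = 0 ↔ i = (⟨l-1, by omega⟩ : Fin l) := by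
    intro i
    have hi := i.isLt
    constructor
    · intro h0
      apply Fin.ext
      simp only [hμ0def] at h0
      simp only [Fin.val_mk]
      omega
    · rintro rfl
      simp only [hμ0def, Fin.val_mk]
      omega
  rw [hone μ hμiff] at hdetnum
  rw [hone μ0 hμ0iff] at hdetden
  -- JT matrix identification
  have hT : OBJT.Tmat x μ = Matrix.of (fun i j : Fin l =>
      genH F (pmList x) ((lam i : ℤ) - (i:ℕ) + (j:ℕ)) -
        genH F (pmList x) ((lam i : ℤ) - (i:ℕ) - (j:ℕ) - 2)) := by
    ext i j
    simp only [OBJT.Tmat, Matrix.of_apply, hμdef]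
    have hi := i.isLt
    congr 2 <;> push_cast <;> omega
  have hdetT0 := OBJT.detT0 x hl
  -- put it together
  rw [hnum, Matrix.det_transpose, hdetnum, hT]
  rw [hden', Matrix.det_transpose, hdetden, hdetT0, one_mul] at hden ⊢
  unfold oJT
  rw [show (2:F) * (Matrix.det (Matrix.of (fun i j : Fin l =>
      genH F (pmList x) ((lam i : ℤ) - (i:ℕ) + (j:ℕ)) -
        genH F (pmList x) ((lam i : ℤ) - (i:ℕ) - (j:ℕ) - 2))) * Matrix.det (OBJT.Emat x))
    = (Matrix.det (Matrix.of (fun i j : Fin l =>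
      genH F (pmList x) ((lam i : ℤ) - (i:ℕ) + (j:ℕ)) -
        genH F (pmList x) ((lam i : ℤ) - (i:ℕ) - (j:ℕ) - 2))) * (2 * Matrix.det (OBJT.Emat x)))
    from by ring]
  rw [mul_div_assoc, div_self hden, mul_one]
end
end

section
/- (Transition from symplectic Schur functions to odd symplectic characters) Let x^± = (x_1^{±1},…,x_n^{±1}) and let λ = (λ_1,…,λ_{n+1}) be a partition. Then sp_λ(x^±;z) = ∑ over all ε = (ε_1,…,ε_{n+1}) ∈ {0,1}^{n+1} of (−z^{−1})^{|ε|} · sp_{(λ_1−ε_1,…,λ_{n+1}−ε_{n+1})}(x_1^{±},…,x_n^{±},z^{±}), where |ε| = ∑ ε_i and a term is interpreted as 0 when (λ_1−ε_1,…,λ_{n+1}−ε_{n+1}) is not a partition (using the Jacobi–Trudi extension, the determinant vanishes in that case). -/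
open scoped BigOperators
noncomputable section

lemma one_sub_mul_geomInv (R : Type*) [CommRing R] (a : R) :
    (1 - PowerSeries.C a * PowerSeries.X) * geomInv R a = 1 := by
  apply PowerSeries.mul_invOfUnit
  simp

lemma prod_snoc_eq {F : Type*} [Field F] {n : ℕ} (x : Fin n → F) (z : F) :
    ((pmList (Fin.snoc x z)).map (geomInv F)).prod
      = (((pmList x ++ [z]).map (geomInv F)).prod) * geomInv F z⁻¹ := by
  have h1 : List.ofFn (Fin.snoc x z) = (List.ofFn x).concat z := by
    rw [List.ofFn_succ']
    simp [Fin.snoc_castSucc]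
  have h2 : List.ofFn (fun i => ((Fin.snoc x z) i)⁻¹)
      = (List.ofFn (fun i => (x i)⁻¹)).concat z⁻¹ := by
    rw [List.ofFn_succ']
    simp [Fin.snoc_castSucc]
  simp only [pmList, h1, h2, List.concat_eq_append, List.map_append, List.prod_append,
    List.map_cons, List.map_nil, List.prod_cons, List.prod_nil]
  ring

lemma genH_rec {F : Type*} [Field F] {n : ℕ} (x : Fin n → F) (z : F) (k : ℤ) :
    genH F (pmList x ++ [z]) k
      = genH F (pmList (Fin.snoc x z)) k
        + (-z⁻¹) * genH F (pmList (Fin.snoc x z)) (k - 1) := by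
  have hPQ : ((pmList x ++ [z]).map (geomInv F)).prod
      = (1 - PowerSeries.C z⁻¹ * PowerSeries.X)
        * ((pmList (Fin.snoc x z)).map (geomInv F)).prod := by
    rw [prod_snoc_eq]
    rw [← mul_assoc, mul_comm (1 - PowerSeries.C z⁻¹ * PowerSeries.X), mul_assoc,
      one_sub_mul_geomInv, mul_one]
  rcases lt_or_ge k 0 with hk | hk
  · rw [genH, genH, genH, if_pos hk, if_pos hk, if_pos (by omega)]
    ring
  · lift k to ℕ using hk with m
    rw [genH, genH, genH, if_neg (by omega), if_neg (by omega), Int.toNat_natCast, hPQ,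
      sub_mul, one_mul, map_sub, mul_assoc, PowerSeries.coeff_C_mul]
    rcases m with _ | m
    · rw [if_pos (by omega), PowerSeries.coeff_zero_X_mul]
      ring
    · rw [if_neg (by omega), PowerSeries.coeff_succ_X_mul]
      have h1 : (((m + 1 : ℕ) : ℤ) - 1).toNat = m := by omega
      rw [h1]
      ring

/-- **Transition formula from symplectic Schur functions to odd symplectic characters.**
For a partition `λ = (λ_1,…,λ_{n+1})`,
`sp_λ(x^±;z) = ∑_{ε ∈ {0,1}^{n+1}} (−z⁻¹)^{|ε|} sp_{λ−ε}(x_1^±,…,x_n^±,z^±)`,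
where a term is `0` when `λ−ε` is not a partition (the Jacobi–Trudi determinant
vanishes in that case). -/
theorem odd_symplectic_transition {F : Type*} [Field F] {n : ℕ}
    (x : Fin n → F) (hx : ∀ i, x i ≠ 0) (z : F) (hz : z ≠ 0)
    (lam : Fin (n + 1) → ℕ) (hlam : Antitone lam) :
    spJT F (genH F (pmList x ++ [z])) (n + 1) (fun i => (lam i : ℤ)) =
      ∑ eps : Fin (n + 1) → Fin 2,
        (-z⁻¹) ^ (∑ i, (eps i : ℕ)) *
          spJT F (genH F (pmList (Fin.snoc x z))) (n + 1)
            (fun i => (lam i : ℤ) - (eps i : ℕ)) := by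
  classical
  set H : ℤ → F := genH F (pmList (Fin.snoc x z)) with hHdef
  set B : Fin (n + 1) → Fin 2 → (Fin (n + 1) → F) := fun i e j =>
    H ((lam i : ℤ) - (e : ℕ) - (i : ℕ) + (j : ℕ)) +
      if 1 ≤ (j : ℕ) then H ((lam i : ℤ) - (e : ℕ) - (i : ℕ) - (j : ℕ)) else 0 with hB
  have key : spJT F (genH F (pmList x ++ [z])) (n + 1) (fun i => (lam i : ℤ))
      = Matrix.detRowAlternating
          (fun i => ∑ e : Fin 2, ((-z⁻¹) ^ (e : ℕ)) • B i e) := by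
    refine congrArg Matrix.det ?_
    funext i j
    simp only [Matrix.of_apply, genH_rec x z, Finset.sum_apply, Fin.sum_univ_two, hB,
      Pi.smul_apply, smul_eq_mul, Fin.val_zero, Fin.val_one, pow_zero, pow_one,
      Nat.cast_zero, Nat.cast_one, sub_zero, one_mul]
    by_cases hj : 1 ≤ (j : ℕ)
    · simp only [if_pos hj]
      have e1 : (lam i : ℤ) - (i : ℕ) + (j : ℕ) - 1 = (lam i : ℤ) - 1 - (i : ℕ) + (j : ℕ) := by
        ring
      have e2 : (lam i : ℤ) - (i : ℕ) - (j : ℕ) - 1 = (lam i : ℤ) - 1 - (i : ℕ) - (j : ℕ) := by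
        ring
      rw [e1, e2]; ring
    · simp only [if_neg hj]
      have e1 : (lam i : ℤ) - (i : ℕ) + (j : ℕ) - 1 = (lam i : ℤ) - 1 - (i : ℕ) + (j : ℕ) := by
        ring
      rw [e1]; ring
  rw [key]
  rw [show (Matrix.detRowAlternating
        (fun i => ∑ e : Fin 2, ((-z⁻¹) ^ (e : ℕ)) • B i e) : F)
      = (Matrix.detRowAlternating (R := F) (n := Fin (n + 1))).toMultilinearMap
          (fun i => ∑ e : Fin 2, ((-z⁻¹) ^ (e : ℕ)) • B i e) from rfl]
  rw [MultilinearMap.map_sum]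
  refine Finset.sum_congr rfl fun eps _ => ?_
  rw [MultilinearMap.map_smul_univ]
  rw [Finset.prod_pow_eq_pow_sum]
  rw [smul_eq_mul]
  rfl
end
end

section
/- (o_λ(x^±;1) equals the odd orthogonal character) Let λ = (λ_1,…,λ_n) be a partition. Then det(A_{ij})_{i,j=1}^{n+1} / det(B_{ij})_{i,j=1}^{n+1} = det( x_i^{λ_j+n−j+1/2} − x_i^{−(λ_j+n−j+1/2)} )_{i,j=1}^n / det( x_i^{n−j+1/2} − x_i^{−(n−j+1/2)} )_{i,j=1}^n, where for 1 ≤ i ≤ n: A_{ij} = x_i^{λ_j+n−j+1} + x_i^{−(λ_j+n−j+1)} − [λ_j>0]·(x_i^{λ_j+n−j} + x_i^{−(λ_j+n−j)}) evaluated at z = 1 (so with z^{−1} = 1), A_{n+1,j} = [λ_j>0]·0 + [λ_j=0]·2 (i.e., the last row evaluated at z=1 giving 0 for λ_j>0 and 2 for λ_j=0), B_{ij} = x_i^{n−j+1} + x_i^{−(n−j+1)} for i ≤ n, and B_{n+1,j} = 2. -/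
open scoped BigOperators
noncomputable section

lemma pow_fact {F : Type*} [Field F] (x : F) (hx : x ≠ 0) (m : ℤ) :
    x^(2*m) + x^(-(2*m)) - (x^(2*m-2) + x^(-(2*m-2))) =
      (x - x⁻¹) * (x^(2*m-1) - x^(-(2*m-1))) := by
  have h1 : x^(2*m) ≠ 0 := zpow_ne_zero _ hx
  simp only [zpow_neg, zpow_sub₀ hx, zpow_two, zpow_one, div_eq_mul_inv, mul_inv, inv_inv]
  field_simp
  ring

lemma card_ge_aux (n z : ℕ) (hz : z ≤ n) :
    (Finset.univ.filter fun j : Fin n => z ≤ (j:ℕ)).card = n - z := by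
  rw [← Finset.card_range (n - z)]
  refine Finset.card_bij' (fun a _ => (a:ℕ) - z)
    (fun b hb => ⟨b + z, by simp only [Finset.mem_range] at hb; omega⟩) ?_ ?_ ?_ ?_
  · intro a ha
    simp only [Finset.mem_filter, Finset.mem_univ, true_and] at ha
    simp only [Finset.mem_range]; omega
  · intro b hb
    simp only [Finset.mem_filter, Finset.mem_univ, true_and]; omega
  · intro a ha
    simp only [Finset.mem_filter, Finset.mem_univ, true_and] at ha
    ext; simp; omega
  · intro b hb
    simp only [Finset.mem_range] at hb
    simp

lemma sign_prod_aux {F : Type*} [Field F] (n z : ℕ) (hz : z ≤ n) :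
    (∏ j : Fin n, (if (j:ℕ) < z then (1:F) else -1)) = (-1)^(n - z) := by
  rw [Finset.prod_ite]
  simp only [Finset.prod_const, one_pow, one_mul, not_lt]
  rw [card_ge_aux n z hz]

lemma key_det {F : Type*} [Field F] {n : ℕ} (t : Fin n → F) (ht : ∀ i, t i ≠ 0)
    (lam' : Fin (n+1) → ℕ) (hanti : Antitone lam') (hlast : lam' (Fin.last n) = 0)
    (A : Matrix (Fin (n+1)) (Fin (n+1)) F)
    (hA : ∀ i j, A i j =
      if hi : (i : ℕ) < n then
        (t ⟨i, hi⟩) ^ (2 * ((lam' j : ℤ) + n - (j : ℕ))) +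
          (t ⟨i, hi⟩) ^ (-(2 * ((lam' j : ℤ) + n - (j : ℕ)))) -
          (if 0 < lam' j then
            (t ⟨i, hi⟩) ^ (2 * ((lam' j : ℤ) + n - (j : ℕ) - 1)) +
              (t ⟨i, hi⟩) ^ (-(2 * ((lam' j : ℤ) + n - (j : ℕ) - 1)))
          else 0)
      else (if lam' j = 0 then 2 else 0)) :
    A.det = 2 * (∏ i, (t i - (t i)⁻¹)) *
      Matrix.det (Matrix.of fun i j : Fin n =>
        (t i) ^ (2 * (lam' j.castSucc : ℤ) + 2 * n - 2 * (j : ℕ) - 1) -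
          (t i) ^ (-(2 * (lam' j.castSucc : ℤ) + 2 * n - 2 * (j : ℕ) - 1))) := by
  have hP : ∃ k : ℕ, ∃ hk : k < n + 1, lam' ⟨k, hk⟩ = 0 := ⟨n, Nat.lt_succ_self n, hlast⟩
  set z := Nat.find hP with hzdef
  obtain ⟨hzn, hz0⟩ := Nat.find_spec hP
  have hz_le : z ≤ n := Nat.lt_succ_iff.mp hzn
  have hzero : ∀ j : Fin (n+1), z ≤ (j:ℕ) → lam' j = 0 := by
    intro j hj
    have h1 : (⟨z, hzn⟩ : Fin (n+1)) ≤ j := hj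
    have h2 := hanti h1
    have hz0' : lam' ⟨z, hzn⟩ = 0 := hz0
    omega
  have hpos : ∀ j : Fin (n+1), (j:ℕ) < z → 0 < lam' j := by
    intro j hj
    have h2 := Nat.find_min hP hj
    push_neg at h2
    have h3 := h2 j.isLt
    simp only [Fin.eta] at h3
    omega
  -- the matrix after column operations
  set A2 : Matrix (Fin (n+1)) (Fin (n+1)) F := Matrix.of fun i j =>
    if z < (j:ℕ) then A i j - A i ⟨(j:ℕ) - 1, lt_of_le_of_lt (Nat.sub_le _ _) j.isLt⟩
    else A i j with hA2def
  have hdet12 : A.det = A2.det := by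
    apply Matrix.det_eq_of_forall_col_eq_smul_add_pred
      (c := fun j : Fin n => if z ≤ (j:ℕ) then (1 : F) else 0)
    · intro i
      simp [hA2def]
    · intro i j
      have hval : ((j.succ : Fin (n+1)) : ℕ) = (j:ℕ) + 1 := rfl
      by_cases h : z ≤ (j:ℕ)
      · have h1 : z < ((j.succ : Fin (n+1)) : ℕ) := by omega
        have he : (⟨((j.succ : Fin (n+1)):ℕ) - 1,
            lt_of_le_of_lt (Nat.sub_le _ _) (j.succ).isLt⟩ : Fin (n+1)) = j.castSucc := by
          ext; simp
        simp only [hA2def, Matrix.of_apply, if_pos h1, if_pos h, he]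
        ring
      · have h1 : ¬ z < ((j.succ : Fin (n+1)) : ℕ) := by omega
        simp only [hA2def, Matrix.of_apply, if_neg h1, if_neg h]
        ring
  -- bottom row of A2
  have hAlast : ∀ k : Fin (n+1), A (Fin.last n) k = if lam' k = 0 then 2 else 0 := by
    intro k; rw [hA]; simp
  have hbot : ∀ j, A2 (Fin.last n) j = if j = (⟨z, hzn⟩ : Fin (n+1)) then 2 else 0 := by
    intro j
    by_cases h : z < (j:ℕ)
    · simp only [hA2def, Matrix.of_apply, if_pos h]
      rw [hAlast, hAlast, if_pos (hzero j (le_of_lt h)),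
        if_pos (hzero ⟨(j:ℕ) - 1, lt_of_le_of_lt (Nat.sub_le _ _) j.isLt⟩ (show z ≤ (j:ℕ)-1 by omega)),
        if_neg (by rintro rfl; exact absurd h (lt_irrefl z))]
      ring
    · push_neg at h
      simp only [hA2def, Matrix.of_apply, if_neg (not_lt.mpr h)]
      rcases eq_or_lt_of_le h with heq | hlt
      · rw [hAlast, if_pos (hzero j (le_of_eq heq.symm)), if_pos (Fin.ext heq)]
      · rw [hAlast, if_neg (by have := hpos j hlt; omega),
          if_neg (by rintro rfl; exact absurd hlt (lt_irrefl z))]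
  -- the minor entries
  have hminor : ∀ (i j : Fin n),
      A2 i.castSucc ((⟨z, hzn⟩ : Fin (n+1)).succAbove j) =
        (t i - (t i)⁻¹) * ((if (j:ℕ) < z then (1:F) else -1) *
          ((t i) ^ (2 * (lam' j.castSucc : ℤ) + 2 * n - 2 * (j : ℕ) - 1) -
            (t i) ^ (-(2 * (lam' j.castSucc : ℤ) + 2 * n - 2 * (j : ℕ) - 1)))) := by
    intro i j
    have hi : ((i.castSucc : Fin (n+1)) : ℕ) < n := by simp
    have hti : (⟨((i.castSucc : Fin (n+1)) : ℕ), hi⟩ : Fin n) = i := by ext; simp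
    by_cases hj : (j:ℕ) < z
    · have hsa : (⟨z, hzn⟩ : Fin (n+1)).succAbove j = j.castSucc :=
        Fin.succAbove_of_castSucc_lt _ _ (by simp [Fin.lt_def]; omega)
      rw [hsa]
      have h2 : ¬ z < ((j.castSucc : Fin (n+1)) : ℕ) := by simp; omega
      simp only [hA2def, Matrix.of_apply, if_neg h2]
      rw [hA, dif_pos hi, hti, if_pos (hpos j.castSucc (by simpa using hj)), if_pos hj]
      have h := pow_fact (t i) (ht i) ((lam' j.castSucc : ℤ) + n - (j:ℕ))
      simp only [Fin.coe_castSucc]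
      linear_combination (norm := ring_nf) h
    · push_neg at hj
      have hsa : (⟨z, hzn⟩ : Fin (n+1)).succAbove j = j.succ :=
        Fin.succAbove_of_le_castSucc _ _ (by simp [Fin.le_def]; omega)
      rw [hsa]
      have h2 : z < ((j.succ : Fin (n+1)) : ℕ) := by simp [Fin.val_succ]; omega
      simp only [hA2def, Matrix.of_apply, if_pos h2]
      have he : (⟨((j.succ : Fin (n+1)) : ℕ) - 1,
          lt_of_le_of_lt (Nat.sub_le _ _) (j.succ).isLt⟩ : Fin (n+1)) = j.castSucc := by
        ext; simp
      rw [he, hA, hA, dif_pos hi, dif_pos hi, hti]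
      have hz1 : lam' j.succ = 0 := hzero j.succ (by simp [Fin.val_succ]; omega)
      have hz2 : lam' j.castSucc = 0 := hzero j.castSucc (by simpa using hj)
      rw [hz1, hz2, if_neg (lt_irrefl 0), if_neg (lt_irrefl 0), if_neg (not_lt.mpr hj)]
      have h := pow_fact (t i) (ht i) ((n:ℤ) - (j:ℕ))
      simp only [Fin.coe_castSucc, Fin.val_succ]
      push_cast
      linear_combination (norm := ring_nf) -h
  -- expand along the bottom row
  have hexp : A2.det = (-1:F)^(n + z) * 2 *
      (A2.submatrix (Fin.last n).succAbove ((⟨z, hzn⟩ : Fin (n+1)).succAbove)).det := by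
    rw [Matrix.det_succ_row A2 (Fin.last n)]
    rw [Finset.sum_eq_single (⟨z, hzn⟩ : Fin (n+1))]
    · rw [hbot, if_pos rfl]
      simp only [Fin.val_last]
      try ring
    · intro b _ hb
      rw [hbot, if_neg hb]
      ring
    · intro h; exact absurd (Finset.mem_univ _) h
  -- compute the minor determinant
  have hsub : (A2.submatrix (Fin.last n).succAbove ((⟨z, hzn⟩ : Fin (n+1)).succAbove)) =
      Matrix.of (fun i j : Fin n => (t i - (t i)⁻¹) * ((if (j:ℕ) < z then (1:F) else -1) *
        ((t i) ^ (2 * (lam' j.castSucc : ℤ) + 2 * n - 2 * (j : ℕ) - 1) -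
          (t i) ^ (-(2 * (lam' j.castSucc : ℤ) + 2 * n - 2 * (j : ℕ) - 1))))) := by
    ext i j
    rw [Matrix.submatrix_apply, Fin.succAbove_last]
    exact hminor i j
  have hmul1 : (Matrix.of (fun i j : Fin n => (t i - (t i)⁻¹) * ((if (j:ℕ) < z then (1:F) else -1) *
        ((t i) ^ (2 * (lam' j.castSucc : ℤ) + 2 * n - 2 * (j : ℕ) - 1) -
          (t i) ^ (-(2 * (lam' j.castSucc : ℤ) + 2 * n - 2 * (j : ℕ) - 1)))))).det =
      (∏ i, (t i - (t i)⁻¹)) * ((-1:F)^(n - z) *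
        Matrix.det (Matrix.of fun i j : Fin n =>
          (t i) ^ (2 * (lam' j.castSucc : ℤ) + 2 * n - 2 * (j : ℕ) - 1) -
            (t i) ^ (-(2 * (lam' j.castSucc : ℤ) + 2 * n - 2 * (j : ℕ) - 1)))) := by
    have hc := Matrix.det_mul_column (fun i => t i - (t i)⁻¹) (Matrix.of fun i j : Fin n =>
      (if (j:ℕ) < z then (1:F) else -1) *
        ((t i) ^ (2 * (lam' j.castSucc : ℤ) + 2 * n - 2 * (j : ℕ) - 1) -
          (t i) ^ (-(2 * (lam' j.castSucc : ℤ) + 2 * n - 2 * (j : ℕ) - 1))))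
    simp only [Matrix.of_apply] at hc
    rw [hc]
    congr 1
    rw [← sign_prod_aux (F := F) n z hz_le]
    exact Matrix.det_mul_row (fun j : Fin n => if (j:ℕ) < z then (1:F) else -1) _
  have hsign : (-1:F)^(n + z) * (-1:F)^(n - z) = 1 := by
    rw [← pow_add, show n + z + (n - z) = 2 * n by omega, pow_mul]
    norm_num
  rw [hdet12, hexp, hsub, hmul1]
  linear_combination (2 * (∏ i, (t i - (t i)⁻¹)) *
    Matrix.det (Matrix.of fun i j : Fin n =>
      (t i) ^ (2 * (lam' j.castSucc : ℤ) + 2 * n - 2 * (j : ℕ) - 1) -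
        (t i) ^ (-(2 * (lam' j.castSucc : ℤ) + 2 * n - 2 * (j : ℕ) - 1)))) * hsign

/-- **`o_λ(x^±;1)` equals the odd orthogonal character `so_λ(x^±)`.**
Half-integer powers are realized by the substitution `x_i = t_i²`.  With `λ` padded by
`λ_{n+1} = 0`, `A` as in the statement (rows `1,…,n` evaluated at `z = 1`, last row
`2·[λ_j = 0]`), and `B` the corresponding denominator matrix, one has
`det A / det B = det(x_i^{λ_j+n−j+1/2} − x_i^{−(λ_j+n−j+1/2)}) / det(x_i^{n−j+1/2} − x_i^{−(n−j+1/2)})`. -/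
theorem universal_orthogonal_at_one_eq_odd_orthogonal {F : Type*} [Field F] {n : ℕ}
    (t : Fin n → F) (ht : ∀ i, t i ≠ 0)
    (lam : Fin n → ℕ) (hlam : Antitone lam)
    (lam' : Fin (n + 1) → ℕ)
    (hlam' : ∀ j : Fin (n + 1), lam' j = if hj : (j : ℕ) < n then lam ⟨j, hj⟩ else 0)
    (A B : Matrix (Fin (n + 1)) (Fin (n + 1)) F)
    (hA : ∀ i j, A i j =
      if hi : (i : ℕ) < n then
        (t ⟨i, hi⟩) ^ (2 * ((lam' j : ℤ) + n - (j : ℕ))) +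
          (t ⟨i, hi⟩) ^ (-(2 * ((lam' j : ℤ) + n - (j : ℕ)))) -
          (if 0 < lam' j then
            (t ⟨i, hi⟩) ^ (2 * ((lam' j : ℤ) + n - (j : ℕ) - 1)) +
              (t ⟨i, hi⟩) ^ (-(2 * ((lam' j : ℤ) + n - (j : ℕ) - 1)))
          else 0)
      else (if lam' j = 0 then 2 else 0))
    (hB : ∀ i j, B i j =
      if hi : (i : ℕ) < n then
        (t ⟨i, hi⟩) ^ (2 * ((n : ℤ) - (j : ℕ))) + (t ⟨i, hi⟩) ^ (-(2 * ((n : ℤ) - (j : ℕ))))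
      else 2)
    (hBne : B.det ≠ 0) :
    A.det / B.det =
      Matrix.det (Matrix.of fun i j : Fin n =>
          (t i) ^ (2 * (lam j : ℤ) + 2 * n - 2 * (j : ℕ) - 1) -
            (t i) ^ (-(2 * (lam j : ℤ) + 2 * n - 2 * (j : ℕ) - 1))) /
        Matrix.det (Matrix.of fun i j : Fin n =>
          (t i) ^ (2 * (n : ℤ) - 2 * (j : ℕ) - 1) - (t i) ^ (-(2 * (n : ℤ) - 2 * (j : ℕ) - 1))) 
:= by
  have hanti : Antitone lam' := by
    intro a b hab
    rw [hlam' a, hlam' b]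
    by_cases hb : (b:ℕ) < n
    · have ha : (a:ℕ) < n := lt_of_le_of_lt hab hb
      rw [dif_pos ha, dif_pos hb]
      exact hlam (show (⟨(a:ℕ), ha⟩ : Fin n) ≤ ⟨(b:ℕ), hb⟩ from hab)
    · rw [dif_neg hb]
      exact Nat.zero_le _
  have hlast : lam' (Fin.last n) = 0 := by rw [hlam']; simp
  have hAdet := key_det t ht lam' hanti hlast A hA
  have hB' : ∀ i j, B i j =
      if hi : (i : ℕ) < n then
        (t ⟨i, hi⟩) ^ (2 * ((((fun _ : Fin (n+1) => (0:ℕ)) j : ℕ) : ℤ) + n - (j : ℕ))) +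
          (t ⟨i, hi⟩) ^ (-(2 * ((((fun _ : Fin (n+1) => (0:ℕ)) j : ℕ) : ℤ) + n - (j : ℕ)))) -
          (if 0 < (fun _ : Fin (n+1) => (0:ℕ)) j then
            (t ⟨i, hi⟩) ^ (2 * ((((fun _ : Fin (n+1) => (0:ℕ)) j : ℕ) : ℤ) + n - (j : ℕ) - 1)) +
              (t ⟨i, hi⟩) ^ (-(2 * ((((fun _ : Fin (n+1) => (0:ℕ)) j : ℕ) : ℤ) + n - (j : ℕ) - 1)))
          else 0)
      else (if (fun _ : Fin (n+1) => (0:ℕ)) j = 0 then 2 else 0) := by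
    intro i j
    rw [hB]
    by_cases hi : (i:ℕ) < n
    · rw [dif_pos hi, dif_pos hi]
      norm_num
    · rw [dif_neg hi, dif_neg hi]
      norm_num
  have hBdet := key_det t ht (fun _ => 0) antitone_const rfl B hB'
  have hlc : ∀ j : Fin n, lam' j.castSucc = lam j := by
    intro j
    rw [hlam']
    rw [dif_pos (show ((j.castSucc : Fin (n+1)) : ℕ) < n by simp)]
    exact congrArg lam (Fin.ext (by simp))
  have hnum : Matrix.det (Matrix.of fun i j : Fin n =>
        (t i) ^ (2 * (lam' j.castSucc : ℤ) + 2 * n - 2 * (j : ℕ) - 1) -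
          (t i) ^ (-(2 * (lam' j.castSucc : ℤ) + 2 * n - 2 * (j : ℕ) - 1))) =
      Matrix.det (Matrix.of fun i j : Fin n =>
        (t i) ^ (2 * (lam j : ℤ) + 2 * n - 2 * (j : ℕ) - 1) -
          (t i) ^ (-(2 * (lam j : ℤ) + 2 * n - 2 * (j : ℕ) - 1))) := by
    congr 1
    ext i j
    simp only [Matrix.of_apply, hlc]
  have hden : Matrix.det (Matrix.of fun i j : Fin n =>
        (t i) ^ (2 * (((fun _ : Fin (n+1) => (0:ℕ)) j.castSucc : ℕ) : ℤ) + 2 * n - 2 * (j : ℕ) - 1) -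
          (t i) ^ (-(2 * (((fun _ : Fin (n+1) => (0:ℕ)) j.castSucc : ℕ) : ℤ) + 2 * n - 2 * (j : ℕ) - 1))) =
      Matrix.det (Matrix.of fun i j : Fin n =>
        (t i) ^ (2 * (n : ℤ) - 2 * (j : ℕ) - 1) - (t i) ^ (-(2 * (n : ℤ) - 2 * (j : ℕ) - 1))) := by
    congr 1
    ext i j
    simp only [Matrix.of_apply]
    norm_num
  rw [hnum] at hAdet
  rw [hden] at hBdet
  rw [hAdet, hBdet]
  rw [hBdet] at hBne
  exact mul_div_mul_left _ _ (left_ne_zero_of_mul hBne)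
end
end

section
/- (Orthogonality of symplectic partition vectors) Let Y(z) and Y*(z) be the symplectic vertex operators on the Fock space of the rank-one Heisenberg algebra, with modes satisfying Y_i Y_j + Y_{j+1} Y_{i−1} = 0, Y*_i Y*_j + Y*_{j−1} Y*_{i+1} = 0, Y_i Y*_j + Y*_{j+1} Y_{i+1} = δ_{i,j}, Y_n|0⟩ = Y*_{−n}|0⟩ = 0 for n > 0, Y_0|0⟩ = Y*_0|0⟩ = |0⟩, ⟨0|Y*_n = −⟨0|Y*_{−n+2}, ⟨0|Y_n = ⟨0|Y_{−n}. For partitions μ = (μ_1,…,μ_l) and λ = (λ_1,…,λ_l) (zero parts allowed), define |λ^{sp}⟩ = Y_{−λ_1}⋯Y_{−λ_l}|0⟩ and ⟨μ^{sp}| = ⟨0|Y*_{−μ_l}⋯Y*_{−μ_1}. Then ⟨μ^{sp}|λ^{sp}⟩ = δ_{λμ}. -/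
open scoped BigOperators

namespace SympOrthAux

variable {F V : Type*} [Field F] [AddCommGroup V] [Module F V]

/-- `Pvec Y vacuum [i₁, …, iₗ] = Y i₁ (Y i₂ ⋯ (Y iₗ vacuum))`. -/
def Pvec (Y : ℤ → Module.End F V) (vacuum : V) : List ℤ → V
  | [] => vacuum
  | i :: t => Y i (Pvec Y vacuum t)

/-- Apply the operators of a list on the outside of a vector. -/
def Papp (Y : ℤ → Module.End F V) (pre : List ℤ) (v : V) : V :=
  pre.foldr (fun c w => Y c w) v

/-- The result of moving `Ys j` through `Pvec a`. -/
def Qvec (Y : ℤ → Module.End F V) (vacuum : V) : List ℤ → ℤ → V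
  | [], _ => 0
  | i :: t, j => (if i = j then Pvec Y vacuum t else 0) - Y (i - 1) (Qvec Y vacuum t (j - 1))

/-- `Sv Ys vac [j₁, …, jₗ] v = vac (Ys jₗ ⋯ (Ys j₁ v))`. -/
def Sv (Ys : ℤ → Module.End F V) (vac : V →ₗ[F] F) : List ℤ → V → F
  | [], v => vac v
  | j :: t, v => Sv Ys vac t (Ys j v)

lemma Papp_nil (Y : ℤ → Module.End F V) (v : V) : Papp Y [] v = v := rfl

lemma Papp_cons (Y : ℤ → Module.End F V) (c : ℤ) (pre : List ℤ) (v : V) :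
    Papp Y (c :: pre) v = Y c (Papp Y pre v) := rfl

lemma Papp_append_singleton (Y : ℤ → Module.End F V) (pre : List ℤ) (c : ℤ) (v : V) :
    Papp Y (pre ++ [c]) v = Papp Y pre (Y c v) := by
  simp [Papp, List.foldr_append]

lemma Papp_zero (Y : ℤ → Module.End F V) (pre : List ℤ) : Papp Y pre (0 : V) = 0 := by
  induction pre with
  | nil => rfl
  | cons c t ih => simp [Papp_cons, ih]

lemma Papp_sub (Y : ℤ → Module.End F V) (pre : List ℤ) (u w : V) :
    Papp Y pre (u - w) = Papp Y pre u - Papp Y pre w := by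
  induction pre with
  | nil => rfl
  | cons c t ih => simp [Papp_cons, ih]

lemma Papp_Pvec (Y : ℤ → Module.End F V) (vacuum : V) (pre rest : List ℤ) :
    Papp Y pre (Pvec Y vacuum rest) = Pvec Y vacuum (pre ++ rest) := by
  induction pre with
  | nil => rfl
  | cons c t ih => simp [Papp_cons, Pvec, ih]

lemma Sv_zero (Ys : ℤ → Module.End F V) (vac : V →ₗ[F] F) (t : List ℤ) :
    Sv Ys vac t (0 : V) = 0 := by
  induction t with
  | nil => simp [Sv]
  | cons j t ih => simp [Sv, ih]

lemma Sv_sub (Ys : ℤ → Module.End F V) (vac : V →ₗ[F] F) (t : List ℤ) (u w : V) :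
    Sv Ys vac t (u - w) = Sv Ys vac t u - Sv Ys vac t w := by
  induction t generalizing u w with
  | nil => simp [Sv]
  | cons j t ih => simp [Sv, ih]

lemma move (Y Ys : ℤ → Module.End F V) (vacuum : V)
    (hrel : ∀ (i j : ℤ) (v : V),
      Ys j (Y i v) = (if i = j then v else 0) - Y (i - 1) (Ys (j - 1) v))
    (hYsneg : ∀ m : ℤ, m < 0 → Ys m vacuum = 0) :
    ∀ (a : List ℤ) (j : ℤ), j < (a.length : ℤ) →
      Ys j (Pvec Y vacuum a) = Qvec Y vacuum a j := by
  intro a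
  induction a with
  | nil =>
      intro j hj
      simp only [List.length_nil, Nat.cast_zero] at hj
      simpa [Pvec, Qvec] using hYsneg j hj
  | cons i t ih =>
      intro j hj
      have ht : j - 1 < (t.length : ℤ) := by
        simp only [List.length_cons] at hj
        push_cast at hj ⊢
        omega
      rw [Pvec, hrel i j, Qvec, ih (j - 1) ht]

/-- The core inner induction: moving a `Ys` mode through a product of `Y` modes. -/
lemma inner (Y Ys : ℤ → Module.End F V) (vacuum : V) (vac : V →ₗ[F] F) :
    ∀ (a pre t : List ℤ) (j : ℤ),
      a.Pairwise (· ≤ ·) → (∀ e ∈ a, e ≤ 0) →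
      pre.Pairwise (· ≤ ·) → (∀ e ∈ pre, e ≤ 0) →
      t.Pairwise (· ≤ ·) → (∀ e ∈ t, e ≤ 0) →
      (∀ e ∈ pre, ∀ h ∈ a, e + 1 ≤ h) →
      (∀ e ∈ t, j + (pre.length : ℤ) ≤ e) →
      pre.length + a.length = t.length + 1 →
      (∀ x y : List ℤ, x.length = t.length → y.length = t.length →
        x.Pairwise (· ≤ ·) → (∀ e ∈ x, e ≤ 0) → y.Pairwise (· ≤ ·) → (∀ e ∈ y, e ≤ 0) →
        Sv Ys vac y (Pvec Y vacuum x) = if x = y then 1 else 0) →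
      Sv Ys vac t (Papp Y pre (Qvec Y vacuum a j)) =
        if pre = [] ∧ a = j :: t then 1 else 0 := by
  intro a
  induction a with
  | nil =>
      intro pre t j _ _ _ _ _ _ _ _ hlen _
      have hpre : pre ≠ [] := by
        intro h
        subst h
        simp at hlen
      simp [Qvec, Papp_zero, Sv_zero, hpre]
  | cons i rest ih =>
      intro pre t j ha hanp hpre hprenp ht htnp hpa hjt hlen hO
      have harest : rest.Pairwise (· ≤ ·) := (List.pairwise_cons.mp ha).2
      have hile : ∀ h ∈ rest, i ≤ h := (List.pairwise_cons.mp ha).1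
      -- the recursive (second) term vanishes
      have hrec : Sv Ys vac t (Papp Y (pre ++ [i - 1]) (Qvec Y vacuum rest (j - 1))) = 0 := by
        rw [ih (pre ++ [i - 1]) t (j - 1) harest
          (fun e he => hanp e (List.mem_cons_of_mem _ he))
          (by
            rw [List.pairwise_append]
            refine ⟨hpre, by simp, ?_⟩
            intro e he h hh
            simp only [List.mem_singleton] at hh
            subst hh
            have := hpa e he i (List.mem_cons_self)
            omega)
          (by
            intro e he
            rcases List.mem_append.mp he with h1 | h1
            · exact hprenp e h1
            · simp only [List.mem_singleton] at h1
              have := hanp i (List.mem_cons_self)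
              omega)
          ht htnp
          (by
            intro e he h hh
            rcases List.mem_append.mp he with h1 | h1
            · have := hpa e h1 i (List.mem_cons_self)
              have := hile h hh
              omega
            · simp only [List.mem_singleton] at h1
              have := hile h hh
              omega)
          (by
            intro e he
            have := hjt e he
            simp only [List.length_append, List.length_singleton, List.length_cons, List.length_nil]
            push_cast at this ⊢
            omega)
          (by
            simp only [List.length_append, List.length_singleton, List.length_cons, List.length_nil] at hlen ⊢
            omega)
          hO]
        simp
      rw [Qvec, Papp_sub, Sv_sub, ← Papp_append_singleton, hrec, sub_zero]
      by_cases hij : i = j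
      · subst hij
        rw [if_pos rfl]
        rcases pre with _ | ⟨p0, ps⟩
        · -- pre = []; the delta term is the outer pairing of `rest` with `t`
          rw [Papp_nil, hO rest t
            (by simp only [List.length_nil, List.length_cons] at hlen; omega) rfl
            harest (fun e he => hanp e (List.mem_cons_of_mem _ he)) ht htnp]
          by_cases hrt : rest = t
          · simp [hrt]
          · simp [hrt, fun h : i :: rest = i :: t => hrt (by injection h)]
        · -- pre nonempty: the produced list differs from t in its head
          rw [Papp_Pvec, hO ((p0 :: ps) ++ rest) t
            (by simp only [List.length_append, List.length_cons] at hlen ⊢; omega) rfl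
            (by
              rw [List.pairwise_append]
              exact ⟨hpre, harest, fun e he h hh => by
                have := hpa e he h (List.mem_cons_of_mem _ hh); omega⟩)
            (by
              intro e he
              rcases List.mem_append.mp he with h1 | h1
              · exact hprenp e h1
              · exact hanp e (List.mem_cons_of_mem _ h1))
            ht htnp]
          have htne : t ≠ [] := by
            intro h
            subst h
            simp only [List.length_append, List.length_cons, List.length_nil] at hlen
            omega
          rcases t with _ | ⟨t0, ts⟩
          · exact absurd rfl htne
          · have h1 : p0 + 1 ≤ i := hpa p0 (List.mem_cons_self) i (List.mem_cons_self)
            have h2 : i + ((ps.length : ℤ) + 1) ≤ t0 := by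
              have := hjt t0 (List.mem_cons_self)
              simp only [List.length_cons] at this
              push_cast at this
              omega
            have hne : (p0 :: ps) ++ rest ≠ t0 :: ts := by
              intro h
              have : p0 = t0 := by
                have := congrArg List.head? h
                simpa using this
              omega
            simp only [List.cons_append] at hne
            simp [hne]
      · -- i ≠ j : no delta term, and the result is 0
        have hne : i :: rest ≠ j :: t := by
          intro h
          exact hij (by injection h)
        simp [hij, Papp_zero, Sv_zero, hne]

lemma outer (Y Ys : ℤ → Module.End F V) (vacuum : V) (vac : V →ₗ[F] F)
    (hrel : ∀ (i j : ℤ) (v : V),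
      Ys j (Y i v) = (if i = j then v else 0) - Y (i - 1) (Ys (j - 1) v))
    (hYsneg : ∀ m : ℤ, m < 0 → Ys m vacuum = 0)
    (hnorm : vac vacuum = 1) :
    ∀ (l : ℕ) (x y : List ℤ), x.length = l → y.length = l →
      x.Pairwise (· ≤ ·) → (∀ e ∈ x, e ≤ 0) → y.Pairwise (· ≤ ·) → (∀ e ∈ y, e ≤ 0) →
      Sv Ys vac y (Pvec Y vacuum x) = if x = y then 1 else 0 := by
  intro l
  induction l with
  | zero =>
      intro x y hx hy _ _ _ _
      rw [List.length_eq_zero_iff] at hx hy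
      subst hx; subst hy
      simp [Sv, Pvec, hnorm]
  | succ n ihn =>
      intro x y hx hy hxs hxn hys hyn
      rcases y with _ | ⟨j, t⟩
      · simp at hy
      have hjx : j < (x.length : ℤ) := by
        have := hyn j (List.mem_cons_self)
        rw [hx]
        push_cast
        omega
      rw [Sv, move Y Ys vacuum hrel hYsneg x j hjx]
      have htlen : t.length = n := by simpa using hy
      have := inner Y Ys vacuum vac x [] t j hxs hxn (by simp) (by simp) 
        (List.pairwise_cons.mp hys).2 (fun e he => hyn e (List.mem_cons_of_mem _ he))
        (by simp)
        (by
          intro e he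
          have := (List.pairwise_cons.mp hys).1 e he
          simpa using this)
        (by simp [hx, htlen])
        (by
          intro x' y' hx' hy' h1 h2 h3 h4
          exact ihn x' y' (by omega) (by omega) h1 h2 h3 h4)
      rw [Papp_nil] at this
      rw [this]
      simp

lemma ofFn_rev' {α : Type*} {n : ℕ} (f : Fin n → α) :
    List.ofFn (fun i => f (Fin.rev i)) = (List.ofFn f).reverse := by
  apply List.ext_getElem
  · simp
  · intro k h1 h2
    rw [List.getElem_reverse, List.getElem_ofFn, List.getElem_ofFn]
    congr 1
    apply Fin.ext
    simp only [Fin.val_rev]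
    simp only [List.length_ofFn, List.length_reverse] at h1 h2 ⊢
    omega

lemma Sv_eq_foldr (Ys : ℤ → Module.End F V) (vac : V →ₗ[F] F) :
    ∀ (y : List ℤ) (v : V),
      vac (((y.map Ys).reverse).foldr (fun f w => f w) v) = Sv Ys vac y v := by
  intro y
  induction y with
  | nil => intro v; rfl
  | cons j t ih =>
      intro v
      simp only [List.map_cons, List.reverse_cons, List.foldr_append, List.foldr_cons,
        List.foldr_nil]
      exact ih (Ys j v)

lemma Pvec_eq_foldr (Y : ℤ → Module.End F V) (vacuum : V) :
    ∀ x : List ℤ, (x.map Y).foldr (fun f w => f w) vacuum = Pvec Y vacuum x := by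
  intro x
  induction x with
  | nil => rfl
  | cons i t ih => simp [Pvec, ih]

end SympOrthAux

/-- **Orthogonality of symplectic partition vectors.**
Given mode operators `Y n`, `Y* n` on a vector space `V` over a field, a vacuum vector
`|0⟩` and a covacuum functional `⟨0|` satisfying the symplectic vertex-operator relations
`Y_i Y_j + Y_{j+1} Y_{i−1} = 0`, `Y*_i Y*_j + Y*_{j−1} Y*_{i+1} = 0`,
`Y_i Y*_j + Y*_{j+1} Y_{i+1} = δ_{i,j}`, `Y_n|0⟩ = Y*_{−n}|0⟩ = 0` for `n > 0`,
`Y_0|0⟩ = Y*_0|0⟩ = |0⟩`, `⟨0|Y*_n = −⟨0|Y*_{−n+2}`, `⟨0|Y_n = ⟨0|Y_{−n}` and `⟨0|0⟩ = 1`,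
the pairing of the partition vectors `|λ^{sp}⟩ = Y_{−λ_1}⋯Y_{−λ_l}|0⟩` and
`⟨μ^{sp}| = ⟨0|Y*_{−μ_l}⋯Y*_{−μ_1}` is `⟨μ^{sp}|λ^{sp}⟩ = δ_{λμ}`. -/
theorem symplectic_partition_vectors_orthogonal
    {F V : Type*} [Field F] [AddCommGroup V] [Module F V]
    (Y Ys : ℤ → Module.End F V) (vacuum : V) (vac : V →ₗ[F] F)
    (hYY : ∀ i j : ℤ, Y i * Y j + Y (j + 1) * Y (i - 1) = 0)
    (hYsYs : ∀ i j : ℤ, Ys i * Ys j + Ys (j - 1) * Ys (i + 1) = 0)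
    (hYYs : ∀ i j : ℤ, Y i * Ys j + Ys (j + 1) * Y (i + 1) =
      if i = j then 1 else 0)
    (hYvac : ∀ n : ℤ, 0 < n → Y n vacuum = 0)
    (hYsvac : ∀ n : ℤ, 0 < n → Ys (-n) vacuum = 0)
    (hY0 : Y 0 vacuum = vacuum) (hYs0 : Ys 0 vacuum = vacuum)
    (hcovacYs : ∀ (n : ℤ) (v : V), vac (Ys n v) = -vac (Ys (-n + 2) v))
    (hcovacY : ∀ (n : ℤ) (v : V), vac (Y n v) = vac (Y (-n) v))
    (hnorm : vac vacuum = 1)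
    {l : ℕ} (mu lam : Fin l → ℕ) (hmu : Antitone mu) (hlam : Antitone lam) :
    vac ((List.ofFn fun i : Fin l => Ys (-(mu (Fin.rev i) : ℤ))).foldr
          (fun f v => f v)
          ((List.ofFn fun i : Fin l => Y (-(lam i : ℤ))).foldr (fun f v => f v) vacuum)) =
      if lam = mu then 1 else 0 := by
  classical
  have hrel : ∀ (i j : ℤ) (v : V),
      Ys j (Y i v) = (if i = j then v else 0) - Y (i - 1) (Ys (j - 1) v) := by
    intro i j v
    have h := hYYs (i - 1) (j - 1)
    have h2 := congrArg (fun (f : Module.End F V) => f v) h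
    simp only [Module.End.mul_apply, LinearMap.add_apply] at h2
    have e1 : (j - 1 + 1 : ℤ) = j := by omega
    have e2 : (i - 1 + 1 : ℤ) = i := by omega
    have hij : ((i - 1 : ℤ) = j - 1) = (i = j) := by
      by_cases h' : i = j <;> simp [h'] <;> omega
    simp only [e1, e2, hij] at h2
    by_cases h' : i = j
    · simp only [h', eq_self_iff_true, if_true] at h2 ⊢
      rw [Module.End.one_apply] at h2
      exact eq_sub_of_add_eq (by rw [add_comm]; exact h2)
    · simp only [if_neg h'] at h2 ⊢
      rw [LinearMap.zero_apply] at h2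
      exact eq_sub_of_add_eq (by rw [add_comm]; exact h2)
  have hYsneg : ∀ m : ℤ, m < 0 → Ys m vacuum = 0 := by
    intro m hm
    have := hYsvac (-m) (by omega)
    simpa using this
  set xl : List ℤ := List.ofFn (fun i : Fin l => -(lam i : ℤ)) with hxl
  set yl : List ℤ := List.ofFn (fun i : Fin l => -(mu i : ℤ)) with hyl
  have hmap1 : (List.ofFn fun i : Fin l => Y (-(lam i : ℤ))) = xl.map Y := by
    rw [hxl, List.map_ofFn]; rfl
  have hmap2 : (List.ofFn fun i : Fin l => Ys (-(mu (Fin.rev i) : ℤ))) =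
      (yl.map Ys).reverse := by
    rw [hyl, List.map_ofFn, ← SympOrthAux.ofFn_rev']; rfl
  rw [hmap1, hmap2, SympOrthAux.Pvec_eq_foldr, SympOrthAux.Sv_eq_foldr]
  have hxs : xl.Pairwise (· ≤ ·) := by
    rw [hxl, List.pairwise_ofFn]
    intro i j hij
    have := hlam (le_of_lt hij)
    simp only [neg_le_neg_iff, Int.ofNat_le]
    exact_mod_cast this
  have hys : yl.Pairwise (· ≤ ·) := by
    rw [hyl, List.pairwise_ofFn]
    intro i j hij
    have := hmu (le_of_lt hij)
    simp only [neg_le_neg_iff, Int.ofNat_le]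
    exact_mod_cast this
  have hxn : ∀ e ∈ xl, e ≤ 0 := by
    intro e he
    rw [hxl, List.mem_ofFn] at he
    obtain ⟨i, hi⟩ := he
    simp only [← hi]
    omega
  have hyn : ∀ e ∈ yl, e ≤ 0 := by
    intro e he
    rw [hyl, List.mem_ofFn] at he
    obtain ⟨i, hi⟩ := he
    simp only [← hi]
    omega
  rw [SympOrthAux.outer Y Ys vacuum vac hrel hYsneg hnorm l xl yl
    (by simp [hxl]) (by simp [hyl]) hxs hxn hys hyn]
  congr 1
  rw [hxl, hyl]
  simp only [List.ofFn_inj, eq_iff_iff]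
  constructor
  · intro h
    funext i
    have := congrFun h i
    simpa using this
  · intro h
    subst h
    rfl
end

section
/- (Transition formula for z-extended orthogonal functions) For λ = (λ_1,…,λ_n,0) and x̲^± = (x_1^{±1},…,x_n^{±1}, z^{±1}), one has o_λ(x^±;z) = ∑_{ε ∈ {0,1}^n} (−z^{−1})^{|ε|} · o_{(λ_1−ε_1,…,λ_n−ε_n)}(x̲^±), where terms with non-partition index vanish (the Jacobi–Trudi determinant is 0 in that case). -/
open scoped BigOperators
noncomputable section

lemma geomInv_mul_cancel {F : Type*} [CommRing F] (a : F) :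
    geomInv F a * (1 - PowerSeries.C a * PowerSeries.X) = 1 := by
  rw [mul_comm]
  exact PowerSeries.mul_invOfUnit _ 1 (by simp)

lemma coeff_mul_one_sub {R : Type*} [CommRing R] (P : PowerSeries R) (c : R) (m : ℕ) :
    PowerSeries.coeff m (P * (1 - PowerSeries.C c * PowerSeries.X)) =
      PowerSeries.coeff m P - c * (if m = 0 then 0 else PowerSeries.coeff (m-1) P) := by
  have h : P * (1 - PowerSeries.C c * PowerSeries.X)
      = P - PowerSeries.C c * (P * PowerSeries.X) := by ring
  rw [h, map_sub, PowerSeries.coeff_C_mul]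
  cases m with
  | zero => simp
  | succ k => simp [PowerSeries.coeff_succ_mul_X]

lemma genH_split {F : Type*} [Field F] {n : ℕ} (x : Fin n → F) (z : F) (k : ℤ) :
    genH F (pmList x ++ [z]) k =
      genH F (pmList (Fin.snoc x z)) k - z⁻¹ * genH F (pmList (Fin.snoc x z)) (k - 1) := by
  have hlist : pmList (Fin.snoc x z)
      = (List.ofFn x ++ [z]) ++ (List.ofFn (fun i => (x i)⁻¹) ++ [z⁻¹]) := by
    unfold pmList
    rw [List.ofFn_succ' (Fin.snoc x z), List.ofFn_succ' (fun i => (Fin.snoc x z i)⁻¹)]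
    simp [List.concat_eq_append]
  have hQ : ((pmList x ++ [z]).map (geomInv F)).prod
      = ((pmList (Fin.snoc x z)).map (geomInv F)).prod
        * (1 - PowerSeries.C z⁻¹ * PowerSeries.X) := by
    rw [hlist]
    simp only [pmList, List.map_append, List.prod_append, List.map_cons, List.map_nil,
      List.prod_cons, List.prod_nil, mul_one]
    linear_combination (-(((List.ofFn x).map (geomInv F)).prod *
      ((List.ofFn fun i => (x i)⁻¹).map (geomInv F)).prod * geomInv F z)) *
      geomInv_mul_cancel (F := F) z⁻¹
  by_cases hk : k < 0
  · have hk1 : k - 1 < 0 := by omega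
    simp [genH, hk, hk1]
  · simp only [genH, if_neg hk]
    rw [hQ, coeff_mul_one_sub]
    by_cases h0 : k = 0
    · subst h0
      simp
    · have h1 : ¬ k - 1 < 0 := by omega
      rw [if_neg h1]
      have ht : ¬ k.toNat = 0 := by omega
      rw [if_neg ht]
      have h2 : k.toNat - 1 = (k - 1).toNat := by omega
      rw [h2]

/-- **Transition formula for `z`-extended orthogonal functions.**
For `λ = (λ_1,…,λ_n,0)` and `x̲^± = (x_1^±,…,x_n^±,z^±)`,
`o_λ(x^±;z) = ∑_{ε ∈ {0,1}^n} (−z⁻¹)^{|ε|} o_{(λ_1−ε_1,…,λ_n−ε_n)}(x̲^±)`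
(padding `λ` and `λ−ε` by a last part `0`); terms with non-partition index vanish,
their Jacobi–Trudi determinant being `0`. -/
theorem orthogonal_transition {F : Type*} [Field F] {n : ℕ}
    (x : Fin n → F) (hx : ∀ i, x i ≠ 0) (z : F) (hz : z ≠ 0)
    (lam : Fin n → ℕ) (hlam : Antitone lam) :
    oJT F (genH F (pmList x ++ [z])) (n + 1)
        (fun j => if hj : (j : ℕ) < n then (lam ⟨j, hj⟩ : ℤ) else 0) =
      ∑ eps : Fin n → Fin 2,
        (-z⁻¹) ^ (∑ i, (eps i : ℕ)) *
          oJT F (genH F (pmList (Fin.snoc x z))) (n + 1)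
            (fun j => if hj : (j : ℕ) < n then (lam ⟨j, hj⟩ : ℤ) - (eps ⟨j, hj⟩ : ℕ) else 0) := by
  classical
  set H' : ℤ → F := genH F (pmList (Fin.snoc x z)) with hH'
  have hsplit : ∀ k : ℤ, genH F (pmList x ++ [z]) k = H' k - z⁻¹ * H' (k-1) :=
    genH_split x z
  have hneg : ∀ k : ℤ, k < 0 → H' k = 0 := fun k hk => by simp [hH', genH, hk]
  set l : Fin (n+1) → ℤ := fun j => if hj : (j : ℕ) < n then (lam ⟨j, hj⟩ : ℤ) else 0 with hl
  set R : ℤ → Fin (n+1) → F := fun a j => H' (a + j) - H' (a - j - 2) with hR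
  have hM : (Matrix.of fun i j : Fin (n+1) =>
      genH F (pmList x ++ [z]) (l i - (i:ℕ) + (j:ℕ)) -
        genH F (pmList x ++ [z]) (l i - (i:ℕ) - (j:ℕ) - 2))
      = fun i => ∑ e : Fin 2, ((-z⁻¹) ^ (e : ℕ)) • R (l i - (e : ℕ) - (i:ℕ)) := by
    funext i j
    simp only [Matrix.of_apply, Fin.sum_univ_two, Fin.val_zero, Fin.val_one, pow_zero, pow_one,
      Nat.cast_zero, Nat.cast_one, Pi.add_apply, Pi.smul_apply, one_smul, smul_eq_mul]
    rw [hsplit, hsplit, hR]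
    have e1 : l i - (i:ℕ) + (j:ℕ) - 1 = l i - 1 - (i:ℕ) + (j:ℕ) := by ring
    have e2 : l i - (i:ℕ) - (j:ℕ) - 2 - 1 = l i - 1 - (i:ℕ) - (j:ℕ) - 2 := by ring
    have e3 : l i - 0 - (i:ℕ) = l i - (i:ℕ) := by ring
    rw [e1, e2, e3]
    ring
  have hdet : (Matrix.detRowAlternating
        (fun i : Fin (n+1) => ∑ e : Fin 2, ((-z⁻¹) ^ (e : ℕ)) • R (l i - (e : ℕ) - (i:ℕ))) : F)
      = ∑ r : Fin (n+1) → Fin 2, Matrix.detRowAlternating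
          (fun i => ((-z⁻¹) ^ ((r i) : ℕ)) • R (l i - ((r i) : ℕ) - (i:ℕ))) :=
    (Matrix.detRowAlternating (R := F) (n := Fin (n+1))).toMultilinearMap.map_sum
      (g := fun (i : Fin (n+1)) (e : Fin 2) => ((-z⁻¹) ^ (e : ℕ)) • R (l i - (e : ℕ) - (i:ℕ)))
  unfold oJT
  rw [Matrix.det, hM]
  refine Eq.trans hdet ?_
  have hsmul : ∀ ε : Fin (n+1) → Fin 2,
      (Matrix.detRowAlternating (fun i => ((-z⁻¹) ^ ((ε i) : ℕ)) • R (l i - ((ε i) : ℕ) - (i:ℕ))))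
      = (∏ i, (-z⁻¹) ^ ((ε i) : ℕ)) • Matrix.detRowAlternating (fun i => R (l i - ((ε i) : ℕ) - (i:ℕ))) :=
    fun ε => (Matrix.detRowAlternating (R := F) (n := Fin (n+1))).toMultilinearMap.map_smul_univ
      (fun i => (-z⁻¹) ^ ((ε i) : ℕ)) (fun i => R (l i - ((ε i) : ℕ) - (i:ℕ)))
  simp only [hsmul]
  -- reindex the sum
  rw [← Equiv.sum_comp (Fin.snocEquiv (fun _ : Fin (n+1) => Fin 2))
    (fun ε : Fin (n+1) → Fin 2 =>
      (∏ i, (-z⁻¹) ^ ((ε i) : ℕ)) •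
        Matrix.detRowAlternating (fun i => R (l i - ((ε i) : ℕ) - (i:ℕ))))]
  rw [Fintype.sum_prod_type, Fin.sum_univ_two]
  simp only [Fin.snocEquiv, Equiv.coe_fn_mk]
  have hzero : ∀ q : Fin n → Fin 2,
      Matrix.detRowAlternating
        (fun i => R (l i - (((Fin.snoc q 1 : Fin (n+1) → Fin 2) i) : ℕ) - (i:ℕ))) = 0 := by
    intro q
    apply Matrix.det_eq_zero_of_row_eq_zero (Fin.last n)
    intro j
    have hlast : l (Fin.last n) = 0 := by
      simp only [hl]
      rw [dif_neg (by simp [Fin.val_last])]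
    have hsn : ((Fin.snoc q 1 : Fin (n+1) → Fin 2) (Fin.last n)) = 1 := Fin.snoc_last _ _
    show R (l (Fin.last n) - (((Fin.snoc q 1 : Fin (n+1) → Fin 2) (Fin.last n)) : ℕ)
        - ((Fin.last n : Fin (n+1)) : ℕ)) j = 0
    simp only [hR]
    rw [hlast, hsn]
    have hj : (j : ℕ) ≤ n := Nat.lt_succ_iff.mp j.isLt
    have h1 : (0:ℤ) - ((1:Fin 2):ℕ) - ((Fin.last n : Fin (n+1)):ℕ) + (j:ℕ) < 0 := by
      simp only [Fin.val_last, Fin.val_one]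
      push_cast
      omega
    have h2 : (0:ℤ) - ((1:Fin 2):ℕ) - ((Fin.last n : Fin (n+1)):ℕ) - (j:ℕ) - 2 < 0 := by
      simp only [Fin.val_last, Fin.val_one]
      push_cast
      omega
    rw [hneg _ h1, hneg _ h2, sub_zero]
  have harg : ∀ (q : Fin n → Fin 2) (i : Fin (n+1)),
      l i - (((Fin.snoc q 0 : Fin (n+1) → Fin 2) i) : ℕ)
        = (if hj : (i : ℕ) < n then (lam ⟨i, hj⟩ : ℤ) - (q ⟨i, hj⟩ : ℕ) else 0) := by
    intro q i
    by_cases hi : (i : ℕ) < n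
    · have h1 : l i = (lam ⟨i, hi⟩ : ℤ) := by simp only [hl]; rw [dif_pos hi]
      have h2 : (Fin.snoc q 0 : Fin (n+1) → Fin 2) i = q ⟨i, hi⟩ := by
        have hic : i = Fin.castSucc ⟨i, hi⟩ := by ext; simp
        conv_lhs => rw [hic]
        exact Fin.snoc_castSucc _ _ _
      rw [h1, h2, dif_pos hi]
    · have h1 : l i = 0 := by simp only [hl]; rw [dif_neg hi]
      have h2 : (Fin.snoc q 0 : Fin (n+1) → Fin 2) i = 0 := by
        have hic : i = Fin.last n := by
          ext; simp only [Fin.val_last]; omega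
        conv_lhs => rw [hic]
        exact Fin.snoc_last _ _
      rw [h1, h2, dif_neg hi]
      simp
  have hmain : ∀ q : Fin n → Fin 2,
      (∏ i, (-z⁻¹) ^ (((Fin.snoc q 0 : Fin (n+1) → Fin 2) i) : ℕ)) •
        Matrix.detRowAlternating
          (fun i => R (l i - (((Fin.snoc q 0 : Fin (n+1) → Fin 2) i) : ℕ) - (i:ℕ)))
      = (-z⁻¹) ^ (∑ i, (q i : ℕ)) *
          oJT F H' (n + 1)
            (fun j => if hj : (j : ℕ) < n then (lam ⟨j, hj⟩ : ℤ) - (q ⟨j, hj⟩ : ℕ) else 0) := by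
    intro q
    have hprod : (∏ i, (-z⁻¹) ^ (((Fin.snoc q 0 : Fin (n+1) → Fin 2) i) : ℕ))
        = (-z⁻¹) ^ (∑ i, (q i : ℕ)) := by
      rw [Fin.prod_univ_castSucc]
      simp [Fin.snoc_castSucc, Fin.snoc_last, Finset.prod_pow_eq_pow_sum]
    have hmat : (fun i => R (l i - (((Fin.snoc q 0 : Fin (n+1) → Fin 2) i) : ℕ) - (i:ℕ)))
        = Matrix.of (fun i j : Fin (n+1) =>
            H' ((if hj : (i : ℕ) < n then (lam ⟨i, hj⟩ : ℤ) - (q ⟨i, hj⟩ : ℕ) else 0)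
                  - (i:ℕ) + (j:ℕ)) -
            H' ((if hj : (i : ℕ) < n then (lam ⟨i, hj⟩ : ℤ) - (q ⟨i, hj⟩ : ℕ) else 0)
                  - (i:ℕ) - (j:ℕ) - 2)) := by
      funext i j
      simp only [hR, Matrix.of_apply, harg q i]
    rw [hprod, hmat, oJT, smul_eq_mul, Matrix.det]
  have hz1 : ∀ q : Fin n → Fin 2,
      (∏ i, (-z⁻¹) ^ (((Fin.snoc q 1 : Fin (n+1) → Fin 2) i) : ℕ)) •
        Matrix.detRowAlternating
          (fun i => R (l i - (((Fin.snoc q 1 : Fin (n+1) → Fin 2) i) : ℕ) - (i:ℕ))) = 0 :=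
    fun q => by rw [hzero q, smul_zero]
  calc (∑ q : Fin n → Fin 2, (∏ i, (-z⁻¹) ^ (((Fin.snoc q 0 : Fin (n+1) → Fin 2) i) : ℕ)) •
        Matrix.detRowAlternating
          (fun i => R (l i - (((Fin.snoc q 0 : Fin (n+1) → Fin 2) i) : ℕ) - (i:ℕ))))
      + (∑ q : Fin n → Fin 2, (∏ i, (-z⁻¹) ^ (((Fin.snoc q 1 : Fin (n+1) → Fin 2) i) : ℕ)) •
        Matrix.detRowAlternating
          (fun i => R (l i - (((Fin.snoc q 1 : Fin (n+1) → Fin 2) i) : ℕ) - (i:ℕ))))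
      = ∑ q : Fin n → Fin 2,
          (-z⁻¹) ^ (∑ i, (q i : ℕ)) *
            oJT F H' (n + 1)
              (fun j => if hj : (j : ℕ) < n then (lam ⟨j, hj⟩ : ℤ) - (q ⟨j, hj⟩ : ℕ) else 0) := by
        rw [Finset.sum_congr rfl (fun q _ => hz1 q), Finset.sum_const_zero, add_zero]
        exact Finset.sum_congr rfl (fun q _ => hmain q)
end
end

section
/- (Vanishing criterion for skew universal symplectic functions) Let β = (β_1,…,β_l) and α = (α_1,…,α_{l+n+m}) be partitions. Then the skew universal symplectic function sp_{α/β}(x^±;z) = det( h_{α_i−β_j−i+j}(x^±;z) + [j>l+1]·h_{α_i−i−j+2l+2}(x^±;z) )_{i,j=1}^{l+n+m} (where β_j is taken as 0 for j > l) is zero unless β ⊆ α, i.e., β_i ≤ α_i for all i. -/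
open scoped BigOperators
noncomputable section

/-- **Vanishing criterion for skew universal symplectic functions.**
For partitions `β = (β_1,…,β_l)` and `α = (α_1,…,α_{l+n+m})`, the skew universal
symplectic function
`sp_{α/β}(x^±;z) = det( h_{α_i−β_j−i+j}(x^±;z) + [j>l+1] h_{α_i−i−j+2l+2}(x^±;z) )`
(with `β_j = 0` for `j > l`) is zero unless `β ⊆ α`, i.e. `β_i ≤ α_i` for all `i`. -/
theorem skew_universal_symplectic_vanishing {F : Type*} [Field F] {n m l : ℕ}
    (x : Fin n → F) (hx : ∀ i, x i ≠ 0) (z : Fin m → F)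
    (alpha : Fin (l + n + m) → ℕ) (halpha : Antitone alpha)
    (beta : Fin l → ℕ) (hbeta : Antitone beta)
    (hnot : ¬ ∀ i : Fin l, beta i ≤ alpha (Fin.castLE (by omega) i)) :
    spSkewJT F (genH F (pmList x ++ List.ofFn z)) (l + n + m) l
        (fun i => (alpha i : ℤ)) (fun i => (beta i : ℤ)) = 0 := by
  push_neg at hnot
  obtain ⟨k, hk⟩ := hnot
  have hkN : (k : ℕ) < l + n + m := by omega
  set k' : Fin (l + n + m) := ⟨k, hkN⟩ with hk'
  unfold spSkewJT
  rw [Matrix.det_apply']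
  apply Finset.sum_eq_zero
  intro σ _
  have hex : ∃ i : Fin (l + n + m), i ≤ k' ∧ k' ≤ σ i := by
    by_contra h
    push_neg at h
    have hc : (Finset.Iic k').card ≤ (Finset.Iio k').card := by
      apply Finset.card_le_card_of_injOn σ
      · intro a ha
        simp only [Finset.mem_coe, Finset.mem_Iic] at ha
        simp only [Finset.mem_coe, Finset.mem_Iio]
        exact h a ha
      · exact fun a _ b _ hab => σ.injective hab
    rw [Fin.card_Iic, Fin.card_Iio] at hc
    omega
  obtain ⟨i, hik, hki⟩ := hex
  rw [Finset.prod_eq_zero (Finset.mem_univ i)]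
  · simp
  · have hil : (i : ℕ) < l := lt_of_le_of_lt (by exact_mod_cast hik) k.isLt
    simp only [Matrix.of_apply]
    rw [dif_pos hil, if_neg (by omega), add_zero]
    unfold genH
    rw [if_pos]
    have h1 : alpha (σ i) ≤ alpha k' := halpha hki
    have h2 : beta k ≤ beta ⟨i, hil⟩ := hbeta (by exact_mod_cast hik)
    have h3 : alpha (Fin.castLE (by omega) k) = alpha k' := rfl
    have h4 : (i : ℕ) ≤ ((σ i : Fin (l+n+m)) : ℕ) := by
      calc (i : ℕ) ≤ (k' : ℕ) := hik
        _ ≤ (σ i : ℕ) := hki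
    rw [h3] at hk
    push_cast
    omega
end
end
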